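/- arXiv:1005.1440 — 9 statements merged into one kernel-verified Lean document; each statement's English description precedes it below -/
import Mathlib

section
/- Let d be a positive integer and λ a real number with d < λ (and 1 ≤ d). Then the partial sum of the Poisson series satisfies ∑_{y=0}^{d-1} λ^y / y! ≤ (λ / (λ - d)) · (λ^{d-1} / (d-1)!). -/
open Finset Nat

lemma fact_aux (y k : ℕ) : (y + k)! ≤ y ! * (y + k) ^ k := by
  induction k with
  | zero => simp
  | succ k ih =>
    rw [← add_assoc, Nat.factorial_succ, pow_succ]
    calc (y + k + 1) * (y + k)!
        ≤ (y + k + 1) * (y ! * (y + k) ^ k) := Nat.mul_le_mul_left _ ih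
      _ ≤ (y + k + 1) * (y ! * (y + k + 1) ^ k) :=
          Nat.mul_le_mul_left _ (Nat.mul_le_mul_left _ (Nat.pow_le_pow_left (Nat.le_succ _) _))
      _ = y ! * ((y + k + 1) ^ k * (y + k + 1)) := by ring

/-- For a positive integer `d` and a real `λ > d`,
`∑_{y=0}^{d-1} λ^y / y! ≤ (λ/(λ-d)) (λ^{d-1}/(d-1)!)`. -/
theorem stmt_2 (d : ℕ) (hd : 1 ≤ d) (lam : ℝ) (hlam : (d : ℝ) < lam) :
    ∑ y ∈ Finset.range d, lam ^ y / (Nat.factorial y)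
      ≤ (lam / (lam - d)) * (lam ^ (d - 1) / (Nat.factorial (d - 1))) := by
  obtain ⟨n, rfl⟩ : ∃ n, d = n + 1 := ⟨d - 1, (Nat.succ_pred_eq_of_pos hd).symm⟩
  have hlam0 : (0:ℝ) < lam := lt_of_le_of_lt (by positivity) hlam
  set q : ℝ := ((n+1 : ℕ) : ℝ) / lam with hq
  have hq0 : 0 ≤ q := by positivity
  have hq1 : q < 1 := (div_lt_one hlam0).2 hlam
  have h1q : 0 < 1 - q := by linarith
  have hdlt : (0:ℝ) < lam - ((n+1:ℕ):ℝ) := by linarith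
  have key : ∀ y ∈ Finset.range (n+1),
      lam ^ y / (y ! : ℝ) ≤ (lam ^ n / (n ! : ℝ)) * q ^ (n - y) := by
    intro y hy
    have hy' : y ≤ n := Nat.lt_succ_iff.mp (Finset.mem_range.mp hy)
    have hpow : lam ^ n = lam ^ y * lam ^ (n - y) := by
      rw [← pow_add, Nat.add_sub_cancel' hy']
    have hnat : n ! ≤ y ! * (n+1) ^ (n - y) := by
      calc n ! = (y + (n - y))! := by rw [Nat.add_sub_cancel' hy']
        _ ≤ y ! * (y + (n - y)) ^ (n - y) := fact_aux _ _
        _ ≤ y ! * (n+1) ^ (n - y) :=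
            Nat.mul_le_mul_left _ (Nat.pow_le_pow_left (by omega) _)
    have hrhs : (lam ^ n / (n ! : ℝ)) * q ^ (n - y)
        = lam ^ y * (((n+1:ℕ):ℝ) ^ (n - y) / (n ! : ℝ)) := by
      rw [hq, div_pow, hpow]
      have hl : lam ^ (n - y) ≠ 0 := by positivity
      have hn : ((n ! : ℕ) : ℝ) ≠ 0 := by positivity
      field_simp
    rw [hrhs]
    have h1 : (1:ℝ) / (y ! : ℝ) ≤ ((n+1:ℕ):ℝ) ^ (n - y) / (n ! : ℝ) := by
      rw [div_le_div_iff₀ (by positivity) (by positivity), one_mul]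
      exact_mod_cast hnat.trans_eq (mul_comm _ _)
    calc lam ^ y / (y ! : ℝ) = lam ^ y * (1 / (y ! : ℝ)) := by ring
      _ ≤ lam ^ y * (((n+1:ℕ):ℝ) ^ (n - y) / (n ! : ℝ)) := by
          apply mul_le_mul_of_nonneg_left h1 (by positivity)
  have hgeom : ∑ k ∈ Finset.range (n+1), q ^ k ≤ 1 / (1 - q) := by
    rw [geom_sum_eq hq1.ne, ← neg_div_neg_eq, neg_sub, neg_sub]
    gcongr
    · nlinarith [pow_nonneg hq0 (n+1)]
  have hfin : 1 / (1 - q) = lam / (lam - ((n+1:ℕ):ℝ)) := by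
    rw [hq]
    field_simp
  calc ∑ y ∈ Finset.range (n+1), lam ^ y / (y ! : ℝ)
      ≤ ∑ y ∈ Finset.range (n+1), (lam ^ n / (n ! : ℝ)) * q ^ (n - y) :=
        Finset.sum_le_sum key
    _ = (lam ^ n / (n ! : ℝ)) * ∑ y ∈ Finset.range (n+1), q ^ (n - y) := by
        rw [Finset.mul_sum]
    _ = (lam ^ n / (n ! : ℝ)) * ∑ k ∈ Finset.range (n+1), q ^ k := by
        congr 1
        have := Finset.sum_range_reflect (fun k => q ^ k) (n+1)
        simpa using this
    _ ≤ (lam ^ n / (n ! : ℝ)) * (1 / (1 - q)) := by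
        apply mul_le_mul_of_nonneg_left hgeom (by positivity)
    _ = (lam / (lam - ((n+1:ℕ):ℝ))) * (lam ^ (n+1-1) / ((n+1-1)! : ℝ)) := by
        rw [hfin]
        simp [Nat.add_sub_cancel]
        ring
end

section
/- Let k = 2d be an even positive integer, let 0 < ε < 1, and let Y₁, …, Y_k be i.i.d. standard normal random variables on a probability space (Ω, P). Then, with λ₁ = k(1+ε)/2, the right tail of the chi-squared statistic satisfies P( ∑_{j=1}^k Y_j² ≥ k(1+ε) ) ≤ ((1+ε)/ε) · e^{-λ₁} · λ₁^{d-1} / (d-1)!. -/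
open MeasureTheory ProbabilityTheory Real Set Filter Metric
open scoped ENNReal NNReal Topology

namespace ChiSqAux


lemma lintegral_pi_prod : ∀ (n : ℕ) (f : Fin n → ℝ → ℝ≥0∞), (∀ i, Measurable (f i)) →
    ∫⁻ x : Fin n → ℝ, ∏ i, f i (x i) ∂(Measure.pi fun _ => (volume : Measure ℝ))
      = ∏ i, ∫⁻ t, f i t := by
  intro n
  induction n with
  | zero => intro f _; simp
  | succ n ih =>
    intro f hf
    rw [← ((measurePreserving_piFinSuccAbove (fun _ : Fin (n+1) => (volume : Measure ℝ))
      0).symm).lintegral_comp_emb (MeasurableEquiv.measurableEmbedding _)]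
    simp_rw [MeasurableEquiv.piFinSuccAbove_symm_apply, Fin.insertNthEquiv,
      Fin.prod_univ_succ, Fin.insertNth_zero]
    simp only [Fin.zero_succAbove, Equiv.coe_fn_mk, Fin.cons_zero, Fin.cons_succ, cast_eq]
    rw [lintegral_prod_mul (f := f 0) (g := fun y : Fin n → ℝ => ∏ i : Fin n, f i.succ (y i))
      (hf 0).aemeasurable
      (Finset.measurable_prod Finset.univ fun i _ =>
        (hf i.succ).comp (measurable_pi_apply i)).aemeasurable]
    rw [ih (fun i => f i.succ) (fun i => hf i.succ)]

lemma pi_gaussian_eq (n : ℕ) :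
    (Measure.pi fun _ : Fin n => gaussianReal 0 1)
      = (volume : Measure (Fin n → ℝ)).withDensity
          (fun x => ∏ i, gaussianPDF 0 1 (x i)) := by
  refine Measure.pi_eq (μ := fun _ : Fin n => gaussianReal 0 1) fun s hs => ?_
  rw [withDensity_apply _ (MeasurableSet.univ_pi hs)]
  have hind : ∀ x : Fin n → ℝ, (Set.univ.pi s).indicator
      (fun x => ∏ i, gaussianPDF 0 1 (x i)) x
      = ∏ i, (s i).indicator (gaussianPDF 0 1) (x i) := by
    intro x
    by_cases hx : x ∈ Set.univ.pi s
    · rw [Set.indicator_of_mem hx]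
      exact Finset.prod_congr rfl fun i _ => (Set.indicator_of_mem (hx i trivial) _).symm
    · rw [Set.indicator_of_notMem hx]
      simp only [Set.mem_pi, Set.mem_univ, true_implies, not_forall] at hx
      obtain ⟨i, hi⟩ := hx
      exact (Finset.prod_eq_zero (Finset.mem_univ i) (Set.indicator_of_notMem hi _)).symm
  rw [← lintegral_indicator (MeasurableSet.univ_pi hs)]
  rw [lintegral_congr hind, volume_pi,
    lintegral_pi_prod n _ (fun i => (measurable_gaussianPDF 0 1).indicator (hs i))]
  refine Finset.prod_congr rfl fun i _ => ?_
  rw [lintegral_indicator (hs i), gaussianReal_apply 0 one_ne_zero]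

lemma map_pi {Ω : Type*} [MeasurableSpace Ω] (P : Measure Ω) {n : ℕ}
    (Y : Fin n → Ω → ℝ) (hmeas : ∀ j, Measurable (Y j))
    (hindep : iIndepFun Y P)
    (hdist : ∀ j, P.map (Y j) = gaussianReal 0 1) :
    P.map (fun ω j => Y j ω) = Measure.pi fun _ : Fin n => gaussianReal 0 1 := by
  refine (Measure.pi_eq (μ := fun _ : Fin n => gaussianReal 0 1) fun s hs => ?_).symm
  rw [Measure.map_apply (measurable_pi_lambda _ hmeas) (MeasurableSet.univ_pi hs)]
  have hpre : (fun ω j => Y j ω) ⁻¹' (Set.univ.pi s) = ⋂ j, Y j ⁻¹' s j := by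
    ext ω; simp [Set.mem_pi]
  rw [hpre, hindep.meas_iInter (fun i => ⟨s i, hs i, rfl⟩)]
  exact Finset.prod_congr rfl fun i _ => by rw [← hdist i, Measure.map_apply (hmeas i) (hs i)]



/-- coefficients of the antiderivative -/
noncomputable def cf (d i : ℕ) : ℝ := 2 ^ (d - 1 - i) * (Nat.factorial (d-1)) / (Nat.factorial i)

lemma cf_rec {d i : ℕ} (hi : 0 < i) (hid : i < d) : (2 * i : ℝ) * cf d i = cf d (i - 1) := by
  obtain ⟨k, rfl⟩ : ∃ k, i = k + 1 := ⟨i - 1, by omega⟩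
  simp only [cf, Nat.add_sub_cancel]
  have he : d - 1 - k = (d - 1 - (k+1)) + 1 := by omega
  rw [he, pow_succ, Nat.factorial_succ]
  have h1 : ((k : ℝ) + 1) ≠ 0 := by positivity
  have h2 : ((Nat.factorial k : ℕ) : ℝ) ≠ 0 := Nat.cast_ne_zero.mpr (Nat.factorial_ne_zero _)
  push_cast
  field_simp

lemma cf_top (d : ℕ) : cf d (d - 1) = 1 := by
  simp only [cf, Nat.sub_self, pow_zero, one_mul]
  exact div_self (Nat.cast_ne_zero.mpr (Nat.factorial_ne_zero _))

lemma cf_pos {d i : ℕ} : 0 < cf d i := by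
  have := Nat.factorial_pos (d-1)
  have := Nat.factorial_pos i
  unfold cf
  positivity

lemma hasDerivAt_exp_neg_sq (r : ℝ) :
    HasDerivAt (fun r : ℝ => Real.exp (-(r^2)/2)) (-r * Real.exp (-(r^2)/2)) r := by
  have h1 : HasDerivAt (fun r : ℝ => -(r^2)/2) (-r) r := by
    have := ((hasDerivAt_pow 2 r).fun_neg.div_const 2)
    refine this.congr_deriv ?_
    ring
  simpa [mul_comm] using h1.exp

lemma hasDerivAt_G (d : ℕ) (hd : 0 < d) (r : ℝ) :
    HasDerivAt (fun r : ℝ => -(Real.exp (-(r^2)/2) * ∑ i ∈ Finset.range d, cf d i * r^(2*i)))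
      (r^(2*d-1) * Real.exp (-(r^2)/2)) r := by
  have hterm : ∀ i : ℕ, HasDerivAt (fun r : ℝ => cf d i * (Real.exp (-(r^2)/2) * r^(2*i)))
      (cf d i * ((-r * Real.exp (-(r^2)/2)) * r^(2*i)
        + Real.exp (-(r^2)/2) * (((2*i : ℕ) : ℝ) * r^(2*i-1)))) r := by
    intro i
    exact ((hasDerivAt_exp_neg_sq r).mul (hasDerivAt_pow (2*i) r)).const_mul _
  have hsum := (HasDerivAt.fun_sum (fun i (_ : i ∈ Finset.range d) => hterm i)).fun_neg
  have hfun : (fun r : ℝ => -∑ i ∈ Finset.range d, cf d i * (Real.exp (-(r^2)/2) * r^(2*i)))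
      = (fun r : ℝ => -(Real.exp (-(r^2)/2) * ∑ i ∈ Finset.range d, cf d i * r^(2*i))) := by
    funext r
    rw [Finset.mul_sum]
    congr 1
    exact Finset.sum_congr rfl fun i _ => by ring
  rw [hfun] at hsum
  refine hsum.congr_deriv (Eq.symm ?_)
  set F : ℕ → ℝ := fun j => if j = 0 then (0:ℝ) else cf d (j-1) * r^(2*(j-1)+1) with hF
  have key : ∀ i ∈ Finset.range d,
      -(cf d i * ((-r * Real.exp (-(r^2)/2)) * r^(2*i)
        + Real.exp (-(r^2)/2) * (((2*i : ℕ) : ℝ) * r^(2*i-1))))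
      = Real.exp (-(r^2)/2) * (F (i+1) - F i) := by
    intro i hmem
    have hid' := Finset.mem_range.mp hmem
    rcases Nat.eq_zero_or_pos i with rfl | hi
    · simp only [hF, if_pos rfl, Nat.add_sub_cancel, if_neg (Nat.one_ne_zero)]
      norm_num
      ring
    · simp only [hF, if_neg (Nat.pos_iff_ne_zero.mp hi), if_neg (Nat.succ_ne_zero i),
        Nat.add_sub_cancel]
      rw [← cf_rec hi hid']
      obtain ⟨m, hm⟩ : ∃ m, 2*i = m + 1 := ⟨2*i-1, by omega⟩
      rw [show 2*(i-1)+1 = m from by omega, show 2*i-1 = m from by omega,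
        show 2*i+1 = m+2 from by omega, show (2*i : ℕ) = m+1 from hm]
      have hc : ((m+1 : ℕ) : ℝ) = 2*(i:ℝ) := by exact_mod_cast congrArg (Nat.cast (R := ℝ)) hm.symm
      rw [hc]
      ring
  rw [← Finset.sum_neg_distrib, Finset.sum_congr rfl key, ← Finset.mul_sum,
    Finset.sum_range_sub F]
  simp only [hF, if_pos rfl, if_neg (Nat.pos_iff_ne_zero.mp hd), cf_top,
    show 2*(d-1)+1 = 2*d-1 from by omega]
  ring

lemma tendsto_G (d : ℕ) :
    Tendsto (fun r : ℝ => -(Real.exp (-(r^2)/2) * ∑ i ∈ Finset.range d, cf d i * r^(2*i)))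
      atTop (𝓝 0) := by
  have hterm : ∀ i : ℕ, Tendsto (fun r : ℝ => Real.exp (-(r^2)/2) * r^(2*i)) atTop (𝓝 0) := by
    intro i
    have h1 := (tendsto_pow_mul_exp_neg_atTop_nhds_zero i).const_mul ((2:ℝ)^i)
    rw [mul_zero] at h1
    have h2 : Tendsto (fun r : ℝ => r^2/2) atTop atTop :=
      (tendsto_pow_atTop two_ne_zero).atTop_div_const (by norm_num)
    have h3 := h1.comp h2
    refine h3.congr fun r => ?_
    simp only [Function.comp_apply]
    rw [div_pow, ← pow_mul, ← neg_div]
    field_simp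
  have := Tendsto.neg (tendsto_finset_sum (Finset.range d)
    (fun i _ => ((hterm i).const_mul (cf d i))))
  simp only [mul_zero, Finset.sum_const_zero, neg_zero] at this
  refine this.congr fun r => ?_
  rw [Finset.mul_sum]
  congr 1
  exact Finset.sum_congr rfl fun i _ => by ring

lemma integrableOn_poly_gauss (d : ℕ) {b : ℝ} (hb : 0 ≤ b) :
    IntegrableOn (fun r : ℝ => r^(2*d-1) * Real.exp (-(r^2)/2)) (Ioi b) := by
  have h := integrableOn_rpow_mul_exp_neg_mul_sq (b := 1/2) (by norm_num)
    (s := ((2*d-1 : ℕ) : ℝ)) (lt_of_lt_of_le (by norm_num) (Nat.cast_nonneg _))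
  have heq : (fun x : ℝ => x ^ ((2*d-1 : ℕ) : ℝ) * Real.exp (-(1/2) * x^2))
      = fun x : ℝ => x ^ (2*d-1) * Real.exp (-(x^2)/2) := by
    funext x
    rw [Real.rpow_natCast]
    congr 1
    ring_nf
  rw [heq] at h
  exact h.mono_set (Ioi_subset_Ioi hb)

lemma J_eq (d : ℕ) (hd : 0 < d) {b : ℝ} (hb : 0 ≤ b) :
    ∫ r in Ioi b, r^(2*d-1) * Real.exp (-(r^2)/2)
      = Real.exp (-(b^2)/2) * ∑ i ∈ Finset.range d, cf d i * b^(2*i) := by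
  rw [integral_Ioi_of_hasDerivAt_of_tendsto' (fun x _ => hasDerivAt_G d hd x)
    (integrableOn_poly_gauss d hb) (tendsto_G d)]
  ring



noncomputable def Kconst (n : ℕ) : ℝ :=
  (n : ℝ) * (volume (ball (0 : EuclideanSpace ℝ (Fin n)) 1)).toReal
    * ((Real.sqrt (2*π))⁻¹)^n


lemma measure_toReal (n : ℕ) (hn : 0 < n) {a : ℝ} (ha : 0 ≤ a) :
    ((Measure.pi fun _ : Fin n => gaussianReal 0 1) {x | a ≤ ∑ i, x i ^ 2}).toReal
      = Kconst n * ∫ r in Ioi (Real.sqrt a), r^(n-1) * Real.exp (-(r^2)/2) := by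
  have hA : MeasurableSet {x : Fin n → ℝ | a ≤ ∑ i, x i ^ 2} :=
    measurableSet_le measurable_const (by fun_prop)
  set C : ℝ := ((Real.sqrt (2*π))⁻¹)^n with hC
  -- step 1 : measure as real set integral of product pdf
  have h1 : ((Measure.pi fun _ : Fin n => gaussianReal 0 1) {x | a ≤ ∑ i, x i ^ 2}).toReal
      = ∫ x in {x : Fin n → ℝ | a ≤ ∑ i, x i ^ 2}, ∏ i, gaussianPDFReal 0 1 (x i) := by
    rw [pi_gaussian_eq, withDensity_apply _ hA]
    have hpdf : ∀ x : Fin n → ℝ, ∏ i, gaussianPDF 0 1 (x i)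
        = ENNReal.ofReal (∏ i, gaussianPDFReal 0 1 (x i)) := fun x => by
      rw [ENNReal.ofReal_prod_of_nonneg fun i _ => gaussianPDFReal_nonneg 0 1 (x i)]; rfl
    simp only [hpdf]
    have hint : Integrable (fun x : Fin n → ℝ => ∏ i, gaussianPDFReal 0 1 (x i)) :=
      Integrable.fintype_prod (fun _ => integrable_gaussianPDFReal 0 1)
    rw [← ofReal_integral_eq_lintegral_ofReal (hint.restrict)
      (Filter.Eventually.of_forall fun x =>
        Finset.prod_nonneg fun i _ => gaussianPDFReal_nonneg 0 1 (x i))]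
    rw [ENNReal.toReal_ofReal (setIntegral_nonneg hA fun x _ =>
      Finset.prod_nonneg fun i _ => gaussianPDFReal_nonneg 0 1 (x i))]
  -- step 2 : the pdf product is a radial function
  have hprod : ∀ x : Fin n → ℝ, ∏ i, gaussianPDFReal 0 1 (x i)
      = C * Real.exp (-(∑ i, (x i)^2)/2) := by
    intro x
    simp only [gaussianPDFReal, NNReal.coe_one, mul_one, sub_zero]
    rw [Finset.prod_mul_distrib, Finset.prod_const, ← Real.exp_sum, Finset.card_univ,
      Fintype.card_fin]
    rw [hC]
    congr 1
    rw [← Finset.sum_div, ← Finset.sum_neg_distrib]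
  -- step 3 : as an integral of a function of the norm, over Euclidean space
  set g : ℝ → ℝ := fun t => (Ici a).indicator (fun t => C * Real.exp (-t/2)) t with hg
  have h2 : ∫ x in {x : Fin n → ℝ | a ≤ ∑ i, x i ^ 2}, ∏ i, gaussianPDFReal 0 1 (x i)
      = ∫ y : EuclideanSpace ℝ (Fin n), (fun r : ℝ => g (r^2)) ‖y‖ := by
    rw [← integral_indicator hA]
    rw [← ((EuclideanSpace.volume_preserving_symm_measurableEquiv_toLp (Fin n)).integral_comp
      (MeasurableEquiv.measurableEmbedding _) _)]
    refine integral_congr_ae (Filter.Eventually.of_forall fun y => ?_)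
    have hnorm : ∑ i, ((MeasurableEquiv.toLp 2 (Fin n → ℝ)).symm y i)^2 = ‖y‖^2 := by
      simp only [EuclideanSpace.norm_eq, Real.norm_eq_abs, sq_abs]
      rw [Real.sq_sqrt (Finset.sum_nonneg fun i _ => sq_nonneg _)]
      rfl
    simp only [Set.indicator_apply, hg, mem_setOf_eq, mem_Ici, hnorm]
    split_ifs with h
    · rw [hprod, hnorm]
    · rfl
  -- step 4 : radial integration
  haveI : Nonempty (Fin n) := ⟨⟨0, hn⟩⟩
  haveI : Nontrivial (EuclideanSpace ℝ (Fin n)) :=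
    Module.nontrivial_of_finrank_pos (R := ℝ)
      (by rw [finrank_euclideanSpace_fin]; exact hn)
  have h3 := MeasureTheory.integral_fun_norm_addHaar
    (volume : Measure (EuclideanSpace ℝ (Fin n))) (fun r : ℝ => g (r^2))
  rw [finrank_euclideanSpace_fin] at h3
  -- step 5 : restricting the radial integral
  have h4 : ∫ r in Ioi (0:ℝ), r ^ (n-1) • g (r^2)
      = ∫ r in Ioi (Real.sqrt a), r^(n-1) * (C * Real.exp (-(r^2)/2)) := by
    have hradial : ∀ r ∈ Ioi (0:ℝ), r ^ (n-1) • g (r^2)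
        = (Ici (Real.sqrt a)).indicator
            (fun r => r^(n-1) * (C * Real.exp (-(r^2)/2))) r := by
      intro r hr
      rw [smul_eq_mul, hg]
      simp only [Set.indicator_apply, mem_Ici]
      by_cases h : Real.sqrt a ≤ r
      · rw [if_pos h, if_pos (show a ≤ r^2 by
          calc a = Real.sqrt a ^ 2 := (Real.sq_sqrt ha).symm
          _ ≤ r ^ 2 := pow_le_pow_left₀ (Real.sqrt_nonneg a) h 2)]
      · rw [if_neg h, if_neg (show ¬ a ≤ r^2 from fun hc => h (by
          calc Real.sqrt a ≤ Real.sqrt (r^2) := Real.sqrt_le_sqrt hc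
          _ = r := Real.sqrt_sq (le_of_lt hr))), mul_zero]
    rw [setIntegral_congr_fun measurableSet_Ioi hradial, integral_indicator measurableSet_Ici,
      Measure.restrict_restrict measurableSet_Ici]
    refine setIntegral_congr_set ?_
    have hsing : ∀ᵐ r : ℝ ∂volume, r ≠ Real.sqrt a := by
      refine (MeasureTheory.measure_eq_zero_iff_ae_notMem).mp (Real.volume_singleton)
    filter_upwards [hsing] with r hr
    show (r ∈ Ici (Real.sqrt a) ∩ Ioi 0) = (r ∈ Ioi (Real.sqrt a))
    rw [eq_iff_iff]
    simp only [mem_inter_iff, mem_Ici, mem_Ioi]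
    constructor
    · rintro ⟨h1, h2⟩
      exact lt_of_le_of_ne h1 (Ne.symm hr)
    · intro h
      exact ⟨le_of_lt h, lt_of_le_of_lt (Real.sqrt_nonneg a) h⟩
  rw [h1, h2, h3, h4, nsmul_eq_mul, smul_eq_mul, Kconst]
  rw [← integral_const_mul]
  rw [hC]
  rw [← integral_const_mul, ← integral_const_mul]
  refine integral_congr_ae (Filter.Eventually.of_forall fun r => ?_)
  simp only [measureReal_def]
  ring



lemma fact_le_pow : ∀ (j i m : ℕ), i + j = m → Nat.factorial m ≤ Nat.factorial i * m ^ j := by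
  intro j
  induction j with
  | zero => intro i m h; simp [← h]
  | succ j ih =>
    intro i m h
    have h1 := ih (i+1) m (by omega)
    calc Nat.factorial m ≤ Nat.factorial (i+1) * m ^ j := h1
    _ = (i+1) * Nat.factorial i * m ^ j := by rw [Nat.factorial_succ]
    _ ≤ m * Nat.factorial i * m ^ j := by
        have : i + 1 ≤ m := by omega
        exact Nat.mul_le_mul_right _ (Nat.mul_le_mul_right _ this)
    _ = Nat.factorial i * m ^ (j+1) := by ring

lemma sum_bound (d : ℕ) (hd : 0 < d) (ε : ℝ) (hε0 : 0 < ε) (hε1 : ε < 1) :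
    ∑ i ∈ Finset.range d, ((d:ℝ)*(1+ε))^i / (Nat.factorial i)
      ≤ ((1+ε)/ε) * ((d:ℝ)*(1+ε))^(d-1) / (Nat.factorial (d-1)) := by
  set lam : ℝ := (d:ℝ)*(1+ε) with hlam
  have hd1 : (1:ℝ) ≤ (d:ℝ) := by exact_mod_cast hd
  have hlam_pos : 0 < lam := by positivity
  set q : ℝ := ((d:ℝ)-1) / lam with hq
  have hq0 : 0 ≤ q := by
    apply div_nonneg _ hlam_pos.le
    linarith
  have hq1 : q < 1 := by
    rw [hq, div_lt_one hlam_pos]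
    nlinarith
  -- termwise bound
  have hterm : ∀ i ∈ Finset.range d,
      lam^i / (Nat.factorial i) ≤ lam^(d-1) / (Nat.factorial (d-1)) * q^(d-1-i) := by
    intro i hi
    have hid : i < d := Finset.mem_range.mp hi
    have hfact := fact_le_pow (d-1-i) i (d-1) (by omega)
    have hfactR : ((Nat.factorial (d-1) : ℕ) : ℝ)
        ≤ (Nat.factorial i : ℕ) * ((d:ℝ)-1) ^ (d-1-i) := by
      have := (Nat.cast_le (α := ℝ)).mpr hfact
      push_cast at this
      rwa [Nat.cast_sub (by omega), Nat.cast_one] at this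
    have hlpow : lam^(d-1) = lam^i * lam^(d-1-i) := by
      rw [← pow_add]
      congr 1
      omega
    have hfi : (0:ℝ) < Nat.factorial i := by exact_mod_cast Nat.factorial_pos i
    have hfd : (0:ℝ) < Nat.factorial (d-1) := by exact_mod_cast Nat.factorial_pos (d-1)
    have hlp : (0:ℝ) < lam ^ (d-1-i) := pow_pos hlam_pos _
    have hlip : (0:ℝ) < lam ^ i := pow_pos hlam_pos _
    rw [hq, div_pow, hlpow]
    have hR : (lam^i * lam^(d-1-i)) / (Nat.factorial (d-1)) * ((((d:ℝ)-1))^(d-1-i) / lam^(d-1-i))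
        = lam^i * (((d:ℝ)-1))^(d-1-i) / (Nat.factorial (d-1)) := by
      field_simp
    rw [hR, div_le_div_iff₀ hfi hfd]
    calc lam ^ i * ((Nat.factorial (d-1) : ℕ) : ℝ)
        ≤ lam^i * (((Nat.factorial i : ℕ) : ℝ) * ((d:ℝ)-1)^(d-1-i)) :=
          mul_le_mul_of_nonneg_left hfactR hlip.le
    _ = lam^i * ((d:ℝ)-1)^(d-1-i) * ((Nat.factorial i : ℕ) : ℝ) := by ring
  calc ∑ i ∈ Finset.range d, lam^i / (Nat.factorial i)
      ≤ ∑ i ∈ Finset.range d, lam^(d-1) / (Nat.factorial (d-1)) * q^(d-1-i) :=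
        Finset.sum_le_sum hterm
  _ = lam^(d-1) / (Nat.factorial (d-1)) * ∑ i ∈ Finset.range d, q^(d-1-i) := by
        rw [Finset.mul_sum]
  _ = lam^(d-1) / (Nat.factorial (d-1)) * ∑ i ∈ Finset.range d, q^i := by
        congr 1
        exact Finset.sum_range_reflect (fun i => q ^ i) d
  _ ≤ lam^(d-1) / (Nat.factorial (d-1)) * ((1+ε)/ε) := by
        have hfd : (0:ℝ) < Nat.factorial (d-1) := by exact_mod_cast Nat.factorial_pos (d-1)
        refine mul_le_mul_of_nonneg_left ?_ (by positivity)
        have hgeom : (∑ i ∈ Finset.range d, q^i) * (1 - q) = 1 - q^d := by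
          have := geom_sum_mul q d
          nlinarith [this]
        have h1q : 0 < 1 - q := by linarith
        have hsum_le : (∑ i ∈ Finset.range d, q^i) ≤ 1 / (1-q) := by
          rw [le_div_iff₀ h1q]
          nlinarith [pow_nonneg hq0 d]
        refine hsum_le.trans ?_
        rw [div_le_div_iff₀ h1q hε0]
        have h1q_eq : 1 - q = (lam - ((d:ℝ)-1)) / lam := by
          rw [hq]; field_simp
        rw [h1q_eq, ← mul_div_assoc, le_div_iff₀ hlam_pos, hlam]
        nlinarith
  _ = ((1+ε)/ε) * lam^(d-1) / (Nat.factorial (d-1)) := by ring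


end ChiSqAux

open ChiSqAux in
/-- Let `k = 2d` be an even positive integer, `0 < ε < 1`, and `Y₁, …, Y_k` i.i.d.
standard normals. With `λ₁ = k(1+ε)/2`, the right tail of the chi-squared statistic
satisfies `P(∑ Yⱼ² ≥ k(1+ε)) ≤ ((1+ε)/ε) e^{-λ₁} λ₁^{d-1}/(d-1)!`. -/
theorem stmt_4 {Ω : Type*} [MeasurableSpace Ω] (P : Measure Ω) [IsProbabilityMeasure P]
    (d : ℕ) (hd : 0 < d) (ε : ℝ) (hε0 : 0 < ε) (hε1 : ε < 1)
    (Y : Fin (2 * d) → Ω → ℝ) (hmeas : ∀ j, Measurable (Y j))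
    (hindep : iIndepFun Y P)
    (hdist : ∀ j, P.map (Y j) = gaussianReal 0 1) :
    (P {ω | (2 * d : ℝ) * (1 + ε) ≤ ∑ j, (Y j ω) ^ 2}).toReal
      ≤ ((1 + ε) / ε) * (Real.exp (-((2 * d : ℝ) * (1 + ε) / 2)) *
          ((2 * d : ℝ) * (1 + ε) / 2) ^ (d - 1) / (Nat.factorial (d - 1))) := by
  have hd2 : 0 < 2*d := by omega
  set a : ℝ := (2 * d : ℝ) * (1 + ε) with haeq
  have ha : (0:ℝ) ≤ a := by positivity
  have hA : MeasurableSet {x : Fin (2*d) → ℝ | a ≤ ∑ i, x i ^ 2} :=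
    measurableSet_le measurable_const (by fun_prop)
  have hPA : P {ω | a ≤ ∑ j, (Y j ω) ^ 2}
      = (Measure.pi fun _ : Fin (2*d) => gaussianReal 0 1) {x | a ≤ ∑ i, x i ^ 2} := by
    rw [← map_pi P Y hmeas hindep hdist, Measure.map_apply (measurable_pi_lambda _ hmeas) hA]
    rfl
  have hJ0 : ∫ r in Ioi (0:ℝ), r^(2*d-1) * Real.exp (-(r^2)/2) = cf d 0 := by
    rw [J_eq d hd le_rfl]
    rw [Finset.sum_eq_single 0 (fun i _ hi => by rw [zero_pow (by omega), mul_zero])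
      (fun h => absurd (Finset.mem_range.mpr hd) h)]
    norm_num
  have h0 : (1:ℝ) = Kconst (2*d)
      * ∫ r in Ioi (0:ℝ), r^(2*d-1) * Real.exp (-(r^2)/2) := by
    have h := measure_toReal (2*d) hd2 (le_refl (0:ℝ))
    rw [show {x : Fin (2*d) → ℝ | (0:ℝ) ≤ ∑ i, x i ^ 2} = Set.univ from
      Set.eq_univ_of_forall fun x => by
        simp only [Set.mem_setOf_eq]; exact Finset.sum_nonneg fun i _ => sq_nonneg _,
      measure_univ] at h
    simpa using h
  have hK : Kconst (2*d) = (cf d 0)⁻¹ := by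
    rw [hJ0] at h0
    exact eq_inv_of_mul_eq_one_left (by linarith [h0.symm] )
  have hJa : ∫ r in Ioi (Real.sqrt a), r^(2*d-1) * Real.exp (-(r^2)/2)
      = Real.exp (-a/2) * ∑ i ∈ Finset.range d, cf d i * a^i := by
    rw [J_eq d hd (Real.sqrt_nonneg a), Real.sq_sqrt ha]
    congr 1
    refine Finset.sum_congr rfl fun i _ => ?_
    rw [pow_mul, Real.sq_sqrt ha]
  have hcoef : ∀ i ∈ Finset.range d, (cf d 0)⁻¹ * (cf d i * a ^ i)
      = (a/2)^i / (Nat.factorial i) := by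
    intro i hi
    have hid : i < d := Finset.mem_range.mp hi
    unfold cf
    have h2 : (2:ℝ)^(d-1) = 2^(d-1-i) * 2^i := by rw [← pow_add]; congr 1; omega
    simp only [Nat.sub_zero, Nat.factorial_zero, Nat.cast_one, div_one]
    rw [h2, div_pow]
    have hfd : ((Nat.factorial (d-1) : ℕ) : ℝ) ≠ 0 :=
      Nat.cast_ne_zero.mpr (Nat.factorial_ne_zero _)
    have hfi : ((Nat.factorial i : ℕ) : ℝ) ≠ 0 :=
      Nat.cast_ne_zero.mpr (Nat.factorial_ne_zero _)
    field_simp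
  have hsum2 : (cf d 0)⁻¹ * (Real.exp (-a/2) * ∑ i ∈ Finset.range d, cf d i * a^i)
      = Real.exp (-a/2) * ∑ i ∈ Finset.range d, (a/2)^i / (Nat.factorial i) := by
    rw [← Finset.sum_congr rfl hcoef, Finset.mul_sum, Finset.mul_sum, Finset.mul_sum]
    exact Finset.sum_congr rfl fun i _ => by ring
  rw [hPA, measure_toReal (2*d) hd2 ha, hJa, hK, hsum2, neg_div,
    show a/2 = (d:ℝ)*(1+ε) from by rw [haeq]; ring]
  calc Real.exp (-((d:ℝ)*(1+ε))) * ∑ i ∈ Finset.range d, ((d:ℝ)*(1+ε))^i / (Nat.factorial i)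
      ≤ Real.exp (-((d:ℝ)*(1+ε))) * (((1+ε)/ε) * ((d:ℝ)*(1+ε))^(d-1) / (Nat.factorial (d-1))) :=
        mul_le_mul_of_nonneg_left (sum_bound d hd ε hε0 hε1) (Real.exp_nonneg _)
  _ = ((1+ε)/ε) * (Real.exp (-((d:ℝ)*(1+ε))) * ((d:ℝ)*(1+ε))^(d-1) / (Nat.factorial (d-1))) := by
        ring
end

section
/- Let k be a positive integer, 0 < ε < 1, and let Y₁, …, Y_k be i.i.d. standard normal random variables on a probability space (Ω, P). Then P( ∑_{j=1}^k Y_j² ≥ k(1+ε) ) ≤ exp( -(k/2)(ε - ln(1+ε)) ). -/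
open MeasureTheory ProbabilityTheory Real
open scoped ENNReal NNReal

lemma gauss_density_rw (t : ℝ) (x : ℝ) :
    Real.exp (t * x ^ 2) * gaussianPDFReal 0 1 x
      = (Real.sqrt (2 * π))⁻¹ * Real.exp (-(1/2 - t) * x ^ 2) := by
  simp only [gaussianPDFReal, NNReal.coe_one, mul_one, sub_zero]
  rw [mul_left_comm, ← Real.exp_add]
  congr 1
  ring

lemma gauss_sq_int {t : ℝ} (ht : t < 1/2) :
    Integrable (fun x => Real.exp (t * x ^ 2)) (gaussianReal 0 1) := by
  rw [gaussianReal_of_var_ne_zero 0 one_ne_zero, gaussianPDF_def]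
  have hmeas : Measurable fun x => (gaussianPDFReal 0 1 x).toNNReal :=
    (measurable_gaussianPDFReal 0 1).real_toNNReal
  rw [show (fun x => ENNReal.ofReal (gaussianPDFReal 0 1 x))
      = fun x => ((gaussianPDFReal 0 1 x).toNNReal : ℝ≥0∞) from rfl,
    integrable_withDensity_iff_integrable_smul hmeas]
  have : (fun x => ((gaussianPDFReal 0 1 x).toNNReal : ℝ≥0) • Real.exp (t * x ^ 2))
      = fun x => (Real.sqrt (2 * π))⁻¹ * Real.exp (-(1/2 - t) * x ^ 2) := by
    funext x
    rw [NNReal.smul_def, smul_eq_mul, Real.coe_toNNReal _ (gaussianPDFReal_nonneg 0 1 x),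
      mul_comm, gauss_density_rw]
  rw [this]
  exact (integrable_exp_neg_mul_sq (by linarith)).const_mul _

lemma gauss_sq_mgf {t : ℝ} (ht : t < 1/2) :
    ∫ x, Real.exp (t * x ^ 2) ∂(gaussianReal 0 1) = (Real.sqrt (1 - 2 * t))⁻¹ := by
  have hb : (0:ℝ) < 1/2 - t := by linarith
  rw [gaussianReal_of_var_ne_zero 0 one_ne_zero, gaussianPDF_def]
  have hmeas : Measurable fun x => (gaussianPDFReal 0 1 x).toNNReal :=
    (measurable_gaussianPDFReal 0 1).real_toNNReal
  rw [show (fun x => ENNReal.ofReal (gaussianPDFReal 0 1 x))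
      = fun x => ((gaussianPDFReal 0 1 x).toNNReal : ℝ≥0∞) from rfl,
    integral_withDensity_eq_integral_smul hmeas]
  have : (fun x => ((gaussianPDFReal 0 1 x).toNNReal : ℝ≥0) • Real.exp (t * x ^ 2))
      = fun x => (Real.sqrt (2 * π))⁻¹ * Real.exp (-(1/2 - t) * x ^ 2) := by
    funext x
    rw [NNReal.smul_def, smul_eq_mul, Real.coe_toNNReal _ (gaussianPDFReal_nonneg 0 1 x),
      mul_comm, gauss_density_rw]
  rw [this, integral_const_mul, integral_gaussian]
  rw [← Real.sqrt_inv, ← Real.sqrt_inv, ← Real.sqrt_mul (by positivity)]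
  congr 1
  have hπ : (π:ℝ) ≠ 0 := Real.pi_ne_zero
  have hbt : (1:ℝ) - 2*t ≠ 0 := by linarith
  field_simp

/-- Let `k` be a positive integer, `0 < ε < 1`, and `Y₁, …, Y_k` i.i.d. standard normals.
Then `P(∑ Yⱼ² ≥ k(1+ε)) ≤ exp(-(k/2)(ε - ln(1+ε)))`. -/
theorem stmt_8 {Ω : Type*} [MeasurableSpace Ω] (P : Measure Ω) [IsProbabilityMeasure P]
    (k : ℕ) (hk : 0 < k) (ε : ℝ) (hε0 : 0 < ε) (hε1 : ε < 1)
    (Y : Fin k → Ω → ℝ) (hmeas : ∀ j, Measurable (Y j))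
    (hindep : iIndepFun Y P)
    (hdist : ∀ j, P.map (Y j) = gaussianReal 0 1) :
    (P {ω | (k : ℝ) * (1 + ε) ≤ ∑ j, (Y j ω) ^ 2}).toReal
      ≤ Real.exp (-((k : ℝ) / 2) * (ε - Real.log (1 + ε))) := by
  have h1ε : (0:ℝ) < 1 + ε := by linarith
  set t : ℝ := ε / (2 * (1 + ε)) with ht_def
  have ht0 : 0 ≤ t := by positivity
  have ht2 : t < 1/2 := by
    rw [ht_def, div_lt_iff₀ (by linarith)]
    linarith
  set X : Fin k → Ω → ℝ := fun j ω => (Y j ω) ^ 2 with hX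
  have hXmeas : ∀ j, Measurable (X j) := fun j => (hmeas j).pow_const 2
  have hXindep : iIndepFun X P :=
    hindep.comp (fun _ (x : ℝ) => x ^ 2) (fun _ => measurable_id.pow_const 2)
  have hg : ∀ (μ : Measure ℝ), AEStronglyMeasurable (fun x : ℝ => Real.exp (t * x ^ 2)) μ :=
    fun μ => (Real.measurable_exp.comp ((measurable_id.pow_const 2).const_mul t)).aestronglyMeasurable
  have hint : ∀ j, Integrable (fun ω => Real.exp (t * X j ω)) P := by
    intro j
    exact (integrable_map_measure (hg _) (hmeas j).aemeasurable).mp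
      (by rw [hdist j]; exact gauss_sq_int ht2)
  have hmgf : ∀ j, mgf (X j) P t = (Real.sqrt (1 - 2 * t))⁻¹ := by
    intro j
    have : mgf (X j) P t = ∫ x, Real.exp (t * x ^ 2) ∂(P.map (Y j)) :=
      (integral_map (hmeas j).aemeasurable (hg _)).symm
    rw [this, hdist j]
    exact gauss_sq_mgf ht2
  have hS : Integrable (fun ω => Real.exp (t * (∑ j, X j) ω)) P :=
    hXindep.integrable_exp_mul_sum hXmeas (fun j _ => hint j)
  have hset : {ω | (k:ℝ) * (1 + ε) ≤ ∑ j, (Y j ω) ^ 2}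
      = {ω | (k:ℝ) * (1 + ε) ≤ (∑ j, X j) ω} := by
    ext ω; simp [Finset.sum_apply, X]
  rw [hset]
  refine (measure_ge_le_exp_mul_mgf _ ht0 hS).trans ?_
  rw [hXindep.mgf_sum hXmeas Finset.univ]
  simp only [hmgf, Finset.prod_const, Finset.card_univ, Fintype.card_fin]
  have h1 : (1:ℝ) - 2 * t = (1 + ε)⁻¹ := by
    rw [ht_def]; field_simp
    ring
  have h2 : (Real.sqrt (1 - 2 * t))⁻¹ = Real.sqrt (1 + ε) := by
    rw [h1, Real.sqrt_inv, inv_inv]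
  have h3 : (Real.sqrt (1 + ε)) ^ k = Real.exp ((k:ℝ) * (Real.log (1 + ε) / 2)) := by
    rw [← Real.exp_log (Real.sqrt_pos.mpr h1ε), ← Real.exp_nat_mul, Real.log_sqrt h1ε.le]
  have hta : t * (1 + ε) = ε / 2 := by
    rw [ht_def]; field_simp
  rw [h2, h3, ← Real.exp_add]
  refine le_of_eq ?_
  congr 1
  linear_combination (-(k:ℝ)) * hta
end

section
/- Let 0 < ε < 1 and set a = √(2/π)(1+ε). The function A(s) = e^{-a s + s²/2} Φ(s) is strictly convex on (0, ∞); more precisely, its second derivative A''(s) = e^{-a s + s²/2} [ ((s-a)² + 1) Φ(s) + (s - 2a) φ(s) ] is strictly positive for all s > 0. -/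
open MeasureTheory ProbabilityTheory

/-- The standard normal cumulative distribution function. -/
noncomputable def stdNormalCDF (s : ℝ) : ℝ := (gaussianReal 0 1 (Set.Iic s)).toReal

/-- The standard normal density. -/
noncomputable def stdNormalPDF (s : ℝ) : ℝ := gaussianPDFReal 0 1 s

namespace StdNormalAux

open Real Set

lemma pdf_eq (x : ℝ) :
    stdNormalPDF x = (Real.sqrt (2 * π))⁻¹ * Real.exp (-x ^ 2 / 2) := by
  simp [stdNormalPDF, gaussianPDFReal]

lemma pdf_pos (x : ℝ) : 0 < stdNormalPDF x := gaussianPDFReal_pos 0 1 x one_ne_zero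

lemma pdf_cont : Continuous stdNormalPDF := by
  have : Continuous fun x : ℝ => (Real.sqrt (2 * π))⁻¹ * Real.exp (-x ^ 2 / 2) :=
    continuous_const.mul (Real.continuous_exp.comp (by continuity))
  exact this.congr fun x => (pdf_eq x).symm

lemma pdf_integrable : Integrable stdNormalPDF := integrable_gaussianPDFReal 0 1

lemma cdf_eq (s : ℝ) : stdNormalCDF s = ∫ x in Iic s, stdNormalPDF x := by
  rw [stdNormalCDF, gaussianReal_apply_eq_integral 0 one_ne_zero,
    ENNReal.toReal_ofReal (integral_nonneg fun x => gaussianPDFReal_nonneg 0 1 x)]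
  rfl

lemma pdf_even (x : ℝ) : stdNormalPDF (-x) = stdNormalPDF x := by
  rw [pdf_eq, pdf_eq, neg_pow]
  norm_num

lemma cdf_zero : stdNormalCDF 0 = 1 / 2 := by
  have h1 : (∫ x in Iic (0 : ℝ), stdNormalPDF x) = ∫ x in Ioi (0 : ℝ), stdNormalPDF x := by
    have := _root_.integral_comp_neg_Iic (0 : ℝ) stdNormalPDF
    simp only [pdf_even, neg_zero] at this
    exact this
  have h2 : (∫ x in Iic (0 : ℝ), stdNormalPDF x) + (∫ x in Ioi (0 : ℝ), stdNormalPDF x) = 1 := by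
    rw [intervalIntegral.integral_Iic_add_Ioi pdf_integrable.integrableOn
      pdf_integrable.integrableOn]
    exact integral_gaussianPDFReal_eq_one 0 one_ne_zero
  rw [cdf_eq]
  linarith [h1, h2]

lemma cdf_formula (s : ℝ) :
    stdNormalCDF s = 1 / 2 + ∫ x in (0 : ℝ)..s, stdNormalPDF x := by
  have := intervalIntegral.integral_Iic_sub_Iic (f := stdNormalPDF) (μ := volume)
    (a := 0) (b := s) pdf_integrable.integrableOn pdf_integrable.integrableOn
  rw [cdf_eq s, ← this, ← cdf_eq, ← cdf_eq, cdf_zero]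
  ring

lemma cdf_hasDerivAt (s : ℝ) : HasDerivAt stdNormalCDF (stdNormalPDF s) s := by
  have h := intervalIntegral.integral_hasDerivAt_right
    (pdf_integrable.intervalIntegrable (a := 0) (b := s))
    pdf_cont.stronglyMeasurable.stronglyMeasurableAtFilter
    pdf_cont.continuousAt
  have h2 := h.const_add (1 / 2 : ℝ)
  have : (fun u => 1 / 2 + ∫ x in (0 : ℝ)..u, stdNormalPDF x) = stdNormalCDF :=
    funext fun u => (cdf_formula u).symm
  rwa [this] at h2

lemma cdf_ge (s : ℝ) (hs : 0 < s) :
    1 / 2 + s * stdNormalPDF s ≤ stdNormalCDF s := by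
  rw [cdf_formula s]
  have hmono : ∀ x ∈ Icc (0 : ℝ) s, stdNormalPDF s ≤ stdNormalPDF x := by
    intro x hx
    rw [pdf_eq, pdf_eq]
    have h1 : x ^ 2 ≤ s ^ 2 := by nlinarith [hx.1, hx.2]
    have h2 : Real.exp (-s ^ 2 / 2) ≤ Real.exp (-x ^ 2 / 2) :=
      Real.exp_le_exp.2 (by linarith)
    have h3 : (0 : ℝ) ≤ (Real.sqrt (2 * π))⁻¹ :=
      inv_nonneg.2 (Real.sqrt_nonneg _)
    exact mul_le_mul_of_nonneg_left h2 h3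
  have := intervalIntegral.integral_mono_on hs.le
    (intervalIntegrable_const (c := stdNormalPDF s))
    (pdf_integrable.intervalIntegrable) hmono
  rw [intervalIntegral.integral_const] at this
  simp only [smul_eq_mul, sub_zero] at this
  linarith

lemma cdf_ge_half (s : ℝ) (hs : 0 < s) : 1 / 2 ≤ stdNormalCDF s := by
  have := cdf_ge s hs
  nlinarith [pdf_pos s]

lemma pdf_le (x : ℝ) : stdNormalPDF x ≤ (Real.sqrt (2 * π))⁻¹ := by
  rw [pdf_eq]
  have h1 : Real.exp (-x ^ 2 / 2) ≤ 1 := by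
    rw [show (1 : ℝ) = Real.exp 0 by simp]
    exact Real.exp_le_exp.2 (by nlinarith [sq_nonneg x])
  have h3 : (0 : ℝ) ≤ (Real.sqrt (2 * π))⁻¹ := inv_nonneg.2 (Real.sqrt_nonneg _)
  calc (Real.sqrt (2 * π))⁻¹ * Real.exp (-x ^ 2 / 2) ≤ (Real.sqrt (2 * π))⁻¹ * 1 :=
        mul_le_mul_of_nonneg_left h1 h3
    _ = (Real.sqrt (2 * π))⁻¹ := mul_one _

lemma key_pos (ε : ℝ) (hε0 : 0 < ε) (hε1 : ε < 1) (a : ℝ)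
    (ha : a = Real.sqrt (2 / π) * (1 + ε)) (s : ℝ) (hs : 0 < s) :
    0 < ((s - a) ^ 2 + 1) * stdNormalCDF s + (s - 2 * a) * stdNormalPDF s := by
  set c : ℝ := (Real.sqrt (2 * π))⁻¹ with hc
  have hπ : (2 : ℝ) ≤ π := Real.two_le_pi
  have hπ0 : (0 : ℝ) < π := Real.pi_pos
  have h2π : (0 : ℝ) < 2 * π := by linarith
  have hsqrt_pos : 0 < Real.sqrt (2 * π) := Real.sqrt_pos.2 h2π
  have hcpos : 0 < c := inv_pos.2 hsqrt_pos
  have hc2 : c ^ 2 * (2 * π) = 1 := by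
    rw [hc, inv_pow, Real.sq_sqrt h2π.le]
    field_simp
  have hac : a = 2 * c * (1 + ε) := by
    rw [ha, hc]
    have hs2 : Real.sqrt (2 / π) = Real.sqrt 2 / Real.sqrt π :=
      Real.sqrt_div (by norm_num) π
    have hm : Real.sqrt (2 * π) = Real.sqrt 2 * Real.sqrt π :=
      Real.sqrt_mul (by norm_num) π
    have h2 : Real.sqrt 2 * Real.sqrt 2 = 2 := Real.mul_self_sqrt (by norm_num)
    have hπs : 0 < Real.sqrt π := Real.sqrt_pos.2 hπ0
    have hs20 : 0 < Real.sqrt 2 := Real.sqrt_pos.2 (by norm_num)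
    have hkey : (2 : ℝ) * (Real.sqrt 2 * Real.sqrt π)⁻¹ = Real.sqrt 2 / Real.sqrt π := by
      field_simp
      linear_combination (-1 : ℝ) * h2
    rw [hs2, hm, hkey]
  have hΦ := cdf_ge s hs
  have hφ0 := pdf_pos s
  have hφc := pdf_le s
  rw [← hc] at hφc
  set Φ := stdNormalCDF s
  set φ := stdNormalPDF s
  have hΦ0 : (1 : ℝ) / 2 ≤ Φ := by nlinarith
  have hq : (0 : ℝ) < (s - a) ^ 2 + 1 := by positivity
  have hπ3 : (3 : ℝ) < π := Real.pi_gt_three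
  rcases le_or_gt (2 * a) s with hcase | hcase
  · -- s ≥ 2a : both terms fine
    have t1 : 0 < ((s - a) ^ 2 + 1) * Φ := mul_pos hq (by linarith)
    have t2 : 0 ≤ (s - 2 * a) * φ := mul_nonneg (by linarith) hφ0.le
    linarith
  · -- s < 2a
    have hF : ((s - a) ^ 2 + 1) * (1 / 2 + s * φ) + (s - 2 * a) * φ ≤
        ((s - a) ^ 2 + 1) * Φ + (s - 2 * a) * φ := by
      have := mul_le_mul_of_nonneg_left hΦ hq.le
      linarith
    have hg : ((s - a) ^ 2 + 1) * (1 / 2 + s * φ) + (s - 2 * a) * φ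
        = ((s - a) ^ 2 + 1) / 2 + φ * (s * (s - a) ^ 2 + 2 * s - 2 * a) := by ring
    rcases le_or_gt 0 (s * (s - a) ^ 2 + 2 * s - 2 * a) with hgpos | hgneg
    · linarith [hF, hg, mul_nonneg hφ0.le hgpos, hq]
    · -- use φ ≤ c
      have hφg : c * (s * (s - a) ^ 2 + 2 * s - 2 * a) ≤
          φ * (s * (s - a) ^ 2 + 2 * s - 2 * a) :=
        mul_le_mul_of_nonpos_right hφc hgneg.le
      have hkey : 0 < ((s - a) ^ 2 + 1) / 2 + c * (s * (s - a) ^ 2 + 2 * s - 2 * a) := by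
        have h1 : 0 ≤ c * (s * (s - a) ^ 2) := by positivity
        have h2 : 0 ≤ (s - a + 2 * c) ^ 2 := sq_nonneg _
        have h3 : 0 ≤ c ^ 2 * (π - 3) := mul_nonneg (sq_nonneg c) (by linarith)
        nlinarith [hc2]
      linarith [hF, hg, hφg, hkey]

lemma inner_eq (s : ℝ) : -(s ^ 2) / 2 = -s ^ 2 / 2 := by ring

end StdNormalAux

/-- For `0 < ε < 1` and `a = √(2/π)(1+ε)`, the function `A(s) = e^{-as+s²/2} Φ(s)` is
strictly convex on `(0, ∞)`; more precisely its second derivative is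
`A''(s) = e^{-as+s²/2}[((s-a)²+1)Φ(s) + (s-2a)φ(s)]`, which is strictly positive for
all `s > 0`. -/
theorem stmt_10 (ε : ℝ) (hε0 : 0 < ε) (hε1 : ε < 1) (a : ℝ)
    (ha : a = Real.sqrt (2 / Real.pi) * (1 + ε)) :
    StrictConvexOn ℝ (Set.Ioi (0 : ℝ))
      (fun s : ℝ => Real.exp (-(a * s) + s ^ 2 / 2) * stdNormalCDF s) ∧
    ∀ s : ℝ, 0 < s →
      iteratedDeriv 2 (fun s : ℝ => Real.exp (-(a * s) + s ^ 2 / 2) * stdNormalCDF s) s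
          = Real.exp (-(a * s) + s ^ 2 / 2) *
            (((s - a) ^ 2 + 1) * stdNormalCDF s + (s - 2 * a) * stdNormalPDF s) ∧
        0 < Real.exp (-(a * s) + s ^ 2 / 2) *
            (((s - a) ^ 2 + 1) * stdNormalCDF s + (s - 2 * a) * stdNormalPDF s) := by
  classical
  set E : ℝ → ℝ := fun s => Real.exp (-(a * s) + s ^ 2 / 2) with hE
  set A : ℝ → ℝ := fun s => E s * stdNormalCDF s with hA
  -- derivative of E
  have hEderiv : ∀ s : ℝ, HasDerivAt E ((s - a) * E s) s := by
    intro s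
    have hinner : HasDerivAt (fun s : ℝ => -(a * s) + s ^ 2 / 2) (-a + s) s := by
      have h1 : HasDerivAt (fun s : ℝ => a * s) a s := by
        simpa using (hasDerivAt_id s).const_mul a
      have h2 : HasDerivAt (fun s : ℝ => s ^ 2 / 2) s s := by
        have := (hasDerivAt_pow 2 s).div_const 2
        simpa using this
      exact h1.neg.add h2
    have := hinner.exp
    convert this using 1
    ring
  -- derivative of pdf
  have hpdfderiv : ∀ s : ℝ, HasDerivAt stdNormalPDF (-s * stdNormalPDF s) s := by
    intro s
    have hfn : stdNormalPDF = fun x : ℝ =>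
        (Real.sqrt (2 * Real.pi))⁻¹ * Real.exp (-x ^ 2 / 2) :=
      funext StdNormalAux.pdf_eq
    have hinner : HasDerivAt (fun x : ℝ => -x ^ 2 / 2) (-s) s := by
      have h := ((hasDerivAt_pow 2 s).neg).div_const 2
      refine HasDerivAt.congr_deriv h ?_
      push_cast
      ring
    have := (hinner.exp).const_mul (Real.sqrt (2 * Real.pi))⁻¹
    rw [← hfn] at this
    refine HasDerivAt.congr_deriv this ?_
    rw [StdNormalAux.pdf_eq]
    ring
  -- first derivative of A
  set A' : ℝ → ℝ := fun s => E s * ((s - a) * stdNormalCDF s + stdNormalPDF s) with hA'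
  have hA1 : ∀ s : ℝ, HasDerivAt A (A' s) s := by
    intro s
    have := (hEderiv s).mul (StdNormalAux.cdf_hasDerivAt s)
    refine HasDerivAt.congr_deriv this ?_
    simp only [hA']
    ring
  have hderivA : deriv A = A' := funext fun s => (hA1 s).deriv
  -- second derivative
  have hA2 : ∀ s : ℝ, HasDerivAt A'
      (E s * (((s - a) ^ 2 + 1) * stdNormalCDF s + (s - 2 * a) * stdNormalPDF s)) s := by
    intro s
    have hinner : HasDerivAt (fun s : ℝ => (s - a) * stdNormalCDF s + stdNormalPDF s)
        ((1 * stdNormalCDF s + (s - a) * stdNormalPDF s) + -s * stdNormalPDF s) s := by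
      exact (((hasDerivAt_id s).sub_const a).mul (StdNormalAux.cdf_hasDerivAt s)).add
        (hpdfderiv s)
    have := (hEderiv s).mul hinner
    refine HasDerivAt.congr_deriv this ?_
    ring
  have hiter : ∀ s : ℝ,
      iteratedDeriv 2 A s
        = E s * (((s - a) ^ 2 + 1) * stdNormalCDF s + (s - 2 * a) * stdNormalPDF s) := by
    intro s
    rw [iteratedDeriv_succ, iteratedDeriv_one, hderivA]
    exact (hA2 s).deriv
  have hpos : ∀ s : ℝ, 0 < s →
      0 < E s * (((s - a) ^ 2 + 1) * stdNormalCDF s + (s - 2 * a) * stdNormalPDF s) := by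
    intro s hs
    have h1 := StdNormalAux.key_pos ε hε0 hε1 a ha s hs
    have h2 : 0 < E s := Real.exp_pos _
    exact mul_pos h2 h1
  refine ⟨?_, fun s hs => ⟨hiter s, hpos s hs⟩⟩
  apply strictConvexOn_of_deriv2_pos (convex_Ioi 0)
  · exact (continuous_iff_continuousAt.2 fun s => (hA1 s).differentiableAt.continuousAt).continuousOn
  · intro x hx
    rw [interior_Ioi] at hx
    have := hpos x hx
    have heq : deriv^[2] A x
        = E x * (((x - a) ^ 2 + 1) * stdNormalCDF x + (x - 2 * a) * stdNormalPDF x) := by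
      rw [← iteratedDeriv_eq_iterate]
      exact hiter x
    rw [heq]
    exact this
end

section
/- Let 0 < ε < 1 and set a = √(2/π)(1+ε). The equation s = a - φ(s)/Φ(s) has a unique solution s* in (0, ∞), and s* is the unique minimizer on (0, ∞) of the function A(s) = 2 e^{-a s + s²/2} Φ(s). -/
open MeasureTheory ProbabilityTheory

open Set

lemma stdNormalPDF_eq (s : ℝ) :
    stdNormalPDF s = (Real.sqrt (2 * Real.pi))⁻¹ * Real.exp (-(s ^ 2) / 2) := by
  simp [stdNormalPDF, gaussianPDFReal]

lemma stdNormalPDF_pos (s : ℝ) : 0 < stdNormalPDF s :=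
  gaussianPDFReal_pos _ _ _ one_ne_zero

lemma stdNormalPDF_integrable : Integrable stdNormalPDF :=
  integrable_gaussianPDFReal 0 1

lemma stdNormalCDF_eq (s : ℝ) : stdNormalCDF s = ∫ x in Iic s, stdNormalPDF x := by
  rw [stdNormalCDF, gaussianReal_apply_eq_integral 0 one_ne_zero, ENNReal.toReal_ofReal]
  · rfl
  · exact setIntegral_nonneg measurableSet_Iic fun x _ => (stdNormalPDF_pos x).le

lemma stdNormalCDF_sub (x y : ℝ) :
    stdNormalCDF y - stdNormalCDF x = ∫ t in x..y, stdNormalPDF t := by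
  rw [stdNormalCDF_eq, stdNormalCDF_eq]
  exact intervalIntegral.integral_Iic_sub_Iic stdNormalPDF_integrable.integrableOn
    stdNormalPDF_integrable.integrableOn

lemma stdNormalCDF_hasDerivAt (s : ℝ) : HasDerivAt stdNormalCDF (stdNormalPDF s) s := by
  have hfun : stdNormalCDF = fun y => stdNormalCDF 0 + ∫ t in (0:ℝ)..y, stdNormalPDF t := by
    funext y
    rw [← stdNormalCDF_sub 0 y]; ring
  rw [hfun]
  have hcont : Continuous stdNormalPDF := by
    have : stdNormalPDF = fun s => (Real.sqrt (2 * Real.pi))⁻¹ * Real.exp (-(s ^ 2) / 2) :=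
      funext stdNormalPDF_eq
    rw [this]; fun_prop
  exact (intervalIntegral.integral_hasDerivAt_right
    (stdNormalPDF_integrable.intervalIntegrable)
    (hcont.stronglyMeasurableAtFilter _ _) hcont.continuousAt).const_add _

lemma stdNormalCDF_zero : stdNormalCDF 0 = 1 / 2 := by
  have heven : ∀ x : ℝ, stdNormalPDF (-x) = stdNormalPDF x := by
    intro x; rw [stdNormalPDF_eq, stdNormalPDF_eq, neg_pow]; ring_nf
  have h1 : ∫ x in Iic (0:ℝ), stdNormalPDF x = ∫ x in Ioi (0:ℝ), stdNormalPDF x := by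
    rw [← neg_zero, ← integral_comp_neg_Iic 0 stdNormalPDF, neg_zero]
    exact setIntegral_congr_fun measurableSet_Iic fun x _ => (heven x).symm
  have h2 : (∫ x in Iic (0:ℝ), stdNormalPDF x) + ∫ x in Ioi (0:ℝ), stdNormalPDF x
      = ∫ x, stdNormalPDF x :=
    intervalIntegral.integral_Iic_add_Ioi stdNormalPDF_integrable.integrableOn
      stdNormalPDF_integrable.integrableOn
  have h3 : ∫ x, stdNormalPDF x = 1 := integral_gaussianPDFReal_eq_one 0 one_ne_zero
  rw [stdNormalCDF_eq]
  linarith [h1, h2, h3]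

lemma stdNormalCDF_mono : Monotone stdNormalCDF := by
  intro x y hxy
  have := stdNormalCDF_sub x y
  have hnn : 0 ≤ ∫ t in x..y, stdNormalPDF t :=
    intervalIntegral.integral_nonneg hxy fun t _ => (stdNormalPDF_pos t).le
  linarith

lemma stdNormalCDF_half_le {s : ℝ} (hs : 0 ≤ s) : 1 / 2 ≤ stdNormalCDF s := by
  rw [← stdNormalCDF_zero]; exact stdNormalCDF_mono hs

lemma stdNormalCDF_pos {s : ℝ} (hs : 0 ≤ s) : 0 < stdNormalCDF s :=
  lt_of_lt_of_le (by norm_num) (stdNormalCDF_half_le hs)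

lemma stdNormalPDF_hasDerivAt (s : ℝ) :
    HasDerivAt stdNormalPDF (-s * stdNormalPDF s) s := by
  have h1 : HasDerivAt (fun x : ℝ => -(x ^ 2) / 2) (-s) s := by
    have := ((hasDerivAt_pow 2 s).neg.div_const 2)
    exact this.congr_deriv (by norm_num; ring)
  have h2 := (Real.hasDerivAt_exp (-(s ^ 2) / 2)).comp s h1
  have h3 := h2.const_mul ((Real.sqrt (2 * Real.pi))⁻¹)
  have hfun : stdNormalPDF = fun x => (Real.sqrt (2 * Real.pi))⁻¹ * Real.exp (-(x ^ 2) / 2) :=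
    funext stdNormalPDF_eq
  rw [hfun]
  exact h3.congr_deriv (by beta_reduce; ring)

lemma stdNormalPDF_zero : stdNormalPDF 0 = (Real.sqrt (2 * Real.pi))⁻¹ := by
  rw [stdNormalPDF_eq]; norm_num

/-- Auxiliary function controlling convexity. -/
noncomputable def uFn (s : ℝ) : ℝ :=
  stdNormalCDF s ^ 2 - stdNormalPDF s ^ 2 - s * stdNormalPDF s * stdNormalCDF s

lemma uFn_hasDerivAt (s : ℝ) :
    HasDerivAt uFn (stdNormalPDF s * ((1 + s ^ 2) * stdNormalCDF s + s * stdNormalPDF s)) s := by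
  have hΦ := stdNormalCDF_hasDerivAt s
  have hφ := stdNormalPDF_hasDerivAt s
  have h1 := hΦ.pow 2
  have h2 := hφ.pow 2
  have h3 := (((hasDerivAt_id s).mul hφ).mul hΦ)
  have h := (h1.sub h2).sub h3
  exact h.congr_deriv (by simp only [id, Pi.mul_apply]; ring)

lemma uFn_pos {s : ℝ} (hs : 0 ≤ s) : 0 < uFn s := by
  have h0 : 0 < uFn 0 := by
    have hsq : Real.sqrt (2 * Real.pi) ^ 2 = 2 * Real.pi :=
      Real.sq_sqrt (by positivity)
    have hπ : (3:ℝ) < Real.pi := Real.pi_gt_three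
    have hsqpos : 0 < Real.sqrt (2 * Real.pi) := Real.sqrt_pos.2 (by positivity)
    simp only [uFn, stdNormalCDF_zero, stdNormalPDF_zero, zero_mul, sub_zero]
    rw [inv_pow]
    rw [hsq]
    have : (2 * Real.pi)⁻¹ < 1/4 := by
      rw [inv_lt_iff_one_lt_mul₀ (by positivity)]
      nlinarith
    nlinarith
  have hmono : MonotoneOn uFn (Ici 0) := by
    apply monotoneOn_of_deriv_nonneg (convex_Ici 0)
    · exact Continuous.continuousOn (by
        refine continuous_iff_continuousAt.2 fun x => (uFn_hasDerivAt x).continuousAt)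
    · intro x hx
      exact (uFn_hasDerivAt x).differentiableAt.differentiableWithinAt
    · intro x hx
      rw [(uFn_hasDerivAt x).deriv]
      rw [interior_Ici] at hx
      have hx0 : (0:ℝ) < x := hx
      have := stdNormalPDF_pos x
      have := stdNormalCDF_pos hx0.le
      positivity
  calc (0:ℝ) < uFn 0 := h0
    _ ≤ uFn s := hmono (by simp) hs hs

/-- `m(s) = s + φ(s)/Φ(s)`. -/
noncomputable def mFn (s : ℝ) : ℝ := s + stdNormalPDF s / stdNormalCDF s

lemma mFn_hasDerivAt {s : ℝ} (hs : 0 ≤ s) :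
    HasDerivAt mFn (uFn s / stdNormalCDF s ^ 2) s := by
  have hΦpos := stdNormalCDF_pos hs
  have h := (stdNormalPDF_hasDerivAt s).div (stdNormalCDF_hasDerivAt s) hΦpos.ne'
  have h2 := (hasDerivAt_id s).add h
  exact h2.congr_deriv (by rw [uFn]; field_simp; ring)

lemma stdNormalCDF_continuous : Continuous stdNormalCDF :=
  continuous_iff_continuousAt.2 fun x => (stdNormalCDF_hasDerivAt x).continuousAt

lemma stdNormalPDF_continuous : Continuous stdNormalPDF :=
  continuous_iff_continuousAt.2 fun x => (stdNormalPDF_hasDerivAt x).continuousAt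

lemma mFn_continuousOn : ContinuousOn mFn (Ici 0) := by
  apply ContinuousOn.add continuousOn_id
  exact ContinuousOn.div stdNormalPDF_continuous.continuousOn
    stdNormalCDF_continuous.continuousOn fun x hx => (stdNormalCDF_pos hx).ne'

lemma mFn_strictMonoOn : StrictMonoOn mFn (Ici 0) := by
  apply strictMonoOn_of_deriv_pos (convex_Ici 0) mFn_continuousOn
  intro x hx
  rw [interior_Ici] at hx
  have hx0 : (0:ℝ) < x := hx
  rw [(mFn_hasDerivAt hx0.le).deriv]
  have hu := uFn_pos hx0.le
  have hΦ := stdNormalCDF_pos hx0.le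
  positivity

lemma mFn_zero : mFn 0 = Real.sqrt (2 / Real.pi) := by
  have hπ := Real.pi_pos
  have h2π : Real.sqrt (2 * Real.pi) = Real.sqrt 2 * Real.sqrt Real.pi :=
    Real.sqrt_mul (by norm_num) _
  have hdiv : Real.sqrt (2 / Real.pi) = Real.sqrt 2 / Real.sqrt Real.pi :=
    Real.sqrt_div' 2 hπ.le
  have hs2 : Real.sqrt 2 * Real.sqrt 2 = 2 := Real.mul_self_sqrt (by norm_num)
  have hsπ : 0 < Real.sqrt Real.pi := Real.sqrt_pos.2 hπ
  have hs2' : 0 < Real.sqrt 2 := Real.sqrt_pos.2 (by norm_num)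
  rw [mFn, stdNormalCDF_zero, stdNormalPDF_zero, hdiv, h2π]
  field_simp
  nlinarith

/-- For `0 < ε < 1` and `a = √(2/π)(1+ε)`, the equation `s = a - φ(s)/Φ(s)` has a unique
solution `s*` in `(0, ∞)`, and `s*` is the unique minimizer on `(0, ∞)` of
`A(s) = 2 e^{-as+s²/2} Φ(s)`. -/
theorem stmt_11 (ε : ℝ) (hε0 : 0 < ε) (hε1 : ε < 1) (a : ℝ)
    (ha : a = Real.sqrt (2 / Real.pi) * (1 + ε)) :
    ∃ sStar : ℝ, (0 < sStar ∧ sStar = a - stdNormalPDF sStar / stdNormalCDF sStar) ∧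
      (∀ t : ℝ, 0 < t → t = a - stdNormalPDF t / stdNormalCDF t → t = sStar) ∧
      (∀ t : ℝ, 0 < t → t ≠ sStar →
        2 * Real.exp (-(a * sStar) + sStar ^ 2 / 2) * stdNormalCDF sStar
          < 2 * Real.exp (-(a * t) + t ^ 2 / 2) * stdNormalCDF t) := by
  have hπ := Real.pi_pos
  have hsq : 0 < Real.sqrt (2 / Real.pi) := Real.sqrt_pos.2 (by positivity)
  have ha0 : 0 < a := by rw [ha]; nlinarith
  -- existence of the fixed point via IVT applied to mFn
  have hm0 : mFn 0 < a := by rw [mFn_zero, ha]; nlinarith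
  have hma : a < mFn a := by
    have : 0 < stdNormalPDF a / stdNormalCDF a :=
      div_pos (stdNormalPDF_pos a) (stdNormalCDF_pos ha0.le)
    rw [mFn]; linarith
  have hcont : ContinuousOn mFn (Icc 0 a) := mFn_continuousOn.mono Icc_subset_Ici_self
  obtain ⟨sStar, hsIoo, hms⟩ : a ∈ mFn '' Ioo 0 a :=
    intermediate_value_Ioo ha0.le hcont ⟨hm0, hma⟩
  have hs0 : 0 < sStar := hsIoo.1
  have hΦs : 0 < stdNormalCDF sStar := stdNormalCDF_pos hs0.le
  refine ⟨sStar, ⟨hs0, ?_⟩, ?_, ?_⟩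
  · have : sStar + stdNormalPDF sStar / stdNormalCDF sStar = a := hms
    linarith
  · -- uniqueness
    intro t ht hteq
    have hmt : mFn t = a := by rw [mFn]; linarith [hteq]
    exact mFn_strictMonoOn.injOn ht.le hs0.le (by rw [hmt, hms])
  · -- strict minimality
    intro t ht htne
    set A : ℝ → ℝ := fun s => 2 * Real.exp (-(a * s) + s ^ 2 / 2) * stdNormalCDF s with hA
    have hAderiv : ∀ x : ℝ, HasDerivAt A
        (2 * Real.exp (-(a * x) + x ^ 2 / 2) * ((x - a) * stdNormalCDF x + stdNormalPDF x)) x := by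
      intro x
      have h1 : HasDerivAt (fun s : ℝ => -(a * s) + s ^ 2 / 2) (-a + x) x := by
        have ha1 : HasDerivAt (fun s : ℝ => a * s) a x := by
          simpa using (hasDerivAt_id x).const_mul a
        have ha2 : HasDerivAt (fun s : ℝ => s ^ 2 / 2) x x := by
          have := (hasDerivAt_pow 2 x).div_const 2
          exact this.congr_deriv (by simp)
        exact ha1.neg.add ha2
      have h2 := (Real.hasDerivAt_exp _).comp x h1
      have h3 := (h2.const_mul (2:ℝ)).mul (stdNormalCDF_hasDerivAt x)
      exact h3.congr_deriv (by simp only [Function.comp]; ring)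
    have hAcont : Continuous A := by
      apply Continuous.mul _ stdNormalCDF_continuous
      fun_prop
    have hApos : ∀ x : ℝ, 0 ≤ x → 0 < A x := by
      intro x hx
      have := stdNormalCDF_pos hx
      have := Real.exp_pos (-(a * x) + x ^ 2 / 2)
      simp only [hA]
      positivity
    -- derivative of A is positive on (sStar, ∞) ∩ pos, negative on (0, sStar)
    have hkey : ∀ x : ℝ, 0 < x →
        (x - a) * stdNormalCDF x + stdNormalPDF x = stdNormalCDF x * (mFn x - a) := by
      intro x hx
      have hΦ := stdNormalCDF_pos hx.le
      rw [mFn]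
      field_simp
      ring
    rcases lt_or_gt_of_ne htne with hlt | hgt
    · -- t < sStar : A strictly decreasing on [t, sStar]
      have hanti : StrictAntiOn A (Icc t sStar) := by
        apply strictAntiOn_of_deriv_neg (convex_Icc t sStar) hAcont.continuousOn
        intro x hx
        rw [interior_Icc] at hx
        have hx0 : 0 < x := lt_trans ht hx.1
        rw [(hAderiv x).deriv, hkey x hx0]
        have hmx : mFn x < a := by
          rw [← hms]
          exact mFn_strictMonoOn hx0.le hs0.le hx.2
        have hΦ := stdNormalCDF_pos hx0.le
        have hexp := Real.exp_pos (-(a * x) + x ^ 2 / 2)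
        have : stdNormalCDF x * (mFn x - a) < 0 := mul_neg_of_pos_of_neg hΦ (by linarith)
        nlinarith
      have := hanti (left_mem_Icc.2 hlt.le) (right_mem_Icc.2 hlt.le) hlt
      simpa [hA] using this
    · -- sStar < t : A strictly increasing on [sStar, t]
      have hmono : StrictMonoOn A (Icc sStar t) := by
        apply strictMonoOn_of_deriv_pos (convex_Icc sStar t) hAcont.continuousOn
        intro x hx
        rw [interior_Icc] at hx
        have hx0 : 0 < x := lt_trans hs0 hx.1
        rw [(hAderiv x).deriv, hkey x hx0]
        have hmx : a < mFn x := by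
          rw [← hms]
          exact mFn_strictMonoOn hs0.le hx0.le hx.1
        have hΦ := stdNormalCDF_pos hx0.le
        have hexp := Real.exp_pos (-(a * x) + x ^ 2 / 2)
        have : 0 < stdNormalCDF x * (mFn x - a) := mul_pos hΦ (by linarith)
        nlinarith
      have := hmono (left_mem_Icc.2 hgt.le) (right_mem_Icc.2 hgt.le) hgt
      simpa [hA] using this
end

section
/- For every real ζ > 0, the inverse Mill's ratio satisfies φ(ζ) / (1 - Φ(ζ)) > 2√(2/π) · Φ(ζ), where φ is the standard normal density and Φ the standard normal CDF. -/
open MeasureTheory ProbabilityTheory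

open Real Set

lemma radial_int {x : ℝ} (hx : 0 ≤ x) :
    ∫ r in Set.Ioc (0:ℝ) x, r * Real.exp (-(r^2)/2) = 1 - Real.exp (-(x^2)/2) := by
  rw [← intervalIntegral.integral_of_le hx]
  have h : ∀ r ∈ Set.uIcc (0:ℝ) x,
      HasDerivAt (fun r : ℝ => -Real.exp (-(r^2)/2)) (r * Real.exp (-(r^2)/2)) r := by
    intro r _
    have : HasDerivAt (fun r : ℝ => -(r^2)/2) (-r) r := by
      have := ((hasDerivAt_pow 2 r).neg).div_const 2
      simpa using this.congr_deriv (by ring)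
    exact (this.exp.neg).congr_deriv (by ring)
  have hint : IntervalIntegrable (fun r : ℝ => r * Real.exp (-(r^2)/2)) volume 0 x :=
    (continuous_id.mul (((continuous_pow 2).neg.div_const 2).rexp)).intervalIntegrable 0 x
  rw [intervalIntegral.integral_eq_sub_of_hasDerivAt h hint]
  simp; ring

noncomputable def Qd (x : ℝ) : Set (ℝ × ℝ) :=
  {p : ℝ × ℝ | 0 < p.1 ∧ 0 < p.2 ∧ p.1^2 + p.2^2 ≤ x^2}

lemma Qd_meas (x : ℝ) : MeasurableSet (Qd x) := by
  apply MeasurableSet.inter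
  · exact measurableSet_lt measurable_const measurable_fst
  apply MeasurableSet.inter
  · exact measurableSet_lt measurable_const measurable_snd
  · exact measurableSet_le (((measurable_fst.pow_const 2).add (measurable_snd.pow_const 2))) measurable_const

lemma quarter_disk {x : ℝ} (hx : 0 < x) :
    ∫ p in Qd x, Real.exp (-(p.1^2 + p.2^2)/2) = π/2 * (1 - Real.exp (-(x^2)/2)) := by
  have hm := Qd_meas x
  have hprodmeas : MeasurableSet (Set.Ioc (0:ℝ) x ×ˢ Set.Ioo (0:ℝ) (π/2)) :=
    measurableSet_Ioc.prod measurableSet_Ioo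
  have key : ∀ p ∈ polarCoord.target,
      p.1 • (Qd x).indicator (fun p : ℝ × ℝ => Real.exp (-(p.1^2 + p.2^2)/2)) (polarCoord.symm p)
      = (Set.Ioc (0:ℝ) x ×ˢ Set.Ioo (0:ℝ) (π/2)).indicator
          (fun p : ℝ × ℝ => p.1 * Real.exp (-(p.1^2)/2)) p := by
    rintro ⟨r, θ⟩ ⟨hr, hθ⟩
    simp only [Set.mem_Ioi] at hr
    simp only [Set.mem_Ioo] at hθ
    have hsymm : polarCoord.symm (r, θ) = (r * Real.cos θ, r * Real.sin θ) := rfl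
    have hnormsq : (r * Real.cos θ)^2 + (r * Real.sin θ)^2 = r^2 := by
      have := Real.sin_sq_add_cos_sq θ
      nlinarith
    have hmem : polarCoord.symm (r, θ) ∈ Qd x ↔ (r, θ) ∈ Set.Ioc (0:ℝ) x ×ˢ Set.Ioo (0:ℝ) (π/2) := by
      rw [hsymm]
      constructor
      · rintro ⟨h1, h2, h3⟩
        simp only at h1 h2 h3
        have hcos : 0 < Real.cos θ := by nlinarith
        have hsin : 0 < Real.sin θ := by nlinarith
        have hθ1 : 0 < θ := by
          by_contra hc
          push_neg at hc
          have := Real.sin_nonpos_of_nonpos_of_neg_pi_le hc hθ.1.le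
          linarith
        have hθ2 : θ < π/2 := by
          by_contra hc
          push_neg at hc
          have := Real.cos_nonpos_of_pi_div_two_le_of_le hc (by linarith [Real.pi_pos])
          linarith
        rw [hnormsq] at h3
        have hrx : r ≤ x := by nlinarith
        exact ⟨⟨hr, hrx⟩, hθ1, hθ2⟩
      · rintro ⟨⟨hr0, hrx⟩, hθ1, hθ2⟩
        have hcos : 0 < Real.cos θ := Real.cos_pos_of_mem_Ioo ⟨by linarith [Real.pi_pos], hθ2⟩
        have hsin : 0 < Real.sin θ := Real.sin_pos_of_pos_of_lt_pi hθ1 (by linarith [Real.pi_pos])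
        refine ⟨mul_pos hr hcos, mul_pos hr hsin, ?_⟩
        rw [hnormsq]
        nlinarith
    by_cases hmemQ : polarCoord.symm (r, θ) ∈ Qd x
    · rw [Set.indicator_of_mem hmemQ, Set.indicator_of_mem (hmem.mp hmemQ)]
      rw [hsymm]
      simp only [smul_eq_mul, hnormsq]
    · rw [Set.indicator_of_notMem hmemQ, Set.indicator_of_notMem (fun h => hmemQ (hmem.mpr h))]
      simp
  calc ∫ p in Qd x, Real.exp (-(p.1^2 + p.2^2)/2)
      = ∫ p : ℝ × ℝ, (Qd x).indicator (fun p : ℝ × ℝ => Real.exp (-(p.1^2 + p.2^2)/2)) p := by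
        rw [integral_indicator hm]
    _ = ∫ p in polarCoord.target,
          p.1 • (Qd x).indicator (fun p : ℝ × ℝ => Real.exp (-(p.1^2 + p.2^2)/2)) (polarCoord.symm p) := by
        rw [integral_comp_polarCoord_symm]
    _ = ∫ p in polarCoord.target, (Set.Ioc (0:ℝ) x ×ˢ Set.Ioo (0:ℝ) (π/2)).indicator
          (fun p : ℝ × ℝ => p.1 * Real.exp (-(p.1^2)/2)) p := by
        exact setIntegral_congr_fun polarCoord.open_target.measurableSet key
    _ = ∫ p in polarCoord.target ∩ (Set.Ioc (0:ℝ) x ×ˢ Set.Ioo (0:ℝ) (π/2)),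
          p.1 * Real.exp (-(p.1^2)/2) := by
        rw [setIntegral_indicator hprodmeas]
    _ = ∫ p in (Set.Ioc (0:ℝ) x ×ˢ Set.Ioo (0:ℝ) (π/2)), p.1 * Real.exp (-(p.1^2)/2) := by
        have hsub : (Set.Ioc (0:ℝ) x ×ˢ Set.Ioo (0:ℝ) (π/2)) ⊆ polarCoord.target := by
          rintro ⟨r, θ⟩ ⟨⟨hr0, _⟩, hθ1, hθ2⟩
          simp only [polarCoord_target, Set.mem_prod, Set.mem_Ioi, Set.mem_Ioo]
          exact ⟨hr0, by linarith [Real.pi_pos], by linarith [Real.pi_pos]⟩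
        rw [Set.inter_eq_self_of_subset_right hsub]
    _ = (∫ r in Set.Ioc (0:ℝ) x, r * Real.exp (-(r^2)/2)) * ∫ θ in Set.Ioo (0:ℝ) (π/2), (1:ℝ) := by
        rw [Measure.volume_eq_prod, ← setIntegral_prod_mul]
        simp
    _ = π/2 * (1 - Real.exp (-(x^2)/2)) := by
        rw [radial_int hx.le, setIntegral_const, measureReal_def, Real.volume_Ioo, smul_eq_mul,
          ENNReal.toReal_ofReal (by norm_num; positivity)]
        ring

lemma key_ineq {x : ℝ} (hx : 0 < x) :
    π/2 * (1 - Real.exp (-(x^2)/2)) < (∫ t in Set.Ioc (0:ℝ) x, Real.exp (-(t^2)/2))^2 := by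
  set g : ℝ × ℝ → ℝ := fun p => Real.exp (-(p.1^2 + p.2^2)/2) with hg
  set S : Set (ℝ × ℝ) := Set.Ioc (0:ℝ) x ×ˢ Set.Ioc (0:ℝ) x with hS
  set R : Set (ℝ × ℝ) := Set.Ioo (4*x/5) x ×ˢ Set.Ioo (4*x/5) x with hR
  have hgprod : ∀ p : ℝ × ℝ, g p = Real.exp (-(p.1^2)/2) * Real.exp (-(p.2^2)/2) := by
    intro p; rw [hg, ← Real.exp_add]; ring_nf
  have hint1 : Integrable (fun t : ℝ => Real.exp (-(t^2)/2)) := by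
    have h := integrable_exp_neg_mul_sq (by norm_num : (0:ℝ) < 1/2)
    refine h.congr ?_
    filter_upwards with t
    ring_nf
  have hint : IntegrableOn g S := by
    refine Integrable.integrableOn ?_
    have h2 : Integrable (fun p : ℝ × ℝ => Real.exp (-(p.1^2)/2) * Real.exp (-(p.2^2)/2)) := by
      rw [Measure.volume_eq_prod]
      exact hint1.mul_prod hint1
    exact h2.congr (Filter.Eventually.of_forall fun p => (hgprod p).symm)
  have hsq : ∫ p in S, g p = (∫ t in Set.Ioc (0:ℝ) x, Real.exp (-(t^2)/2))^2 := by
    rw [pow_two, Measure.volume_eq_prod, ← setIntegral_prod_mul]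
    exact setIntegral_congr_fun (measurableSet_Ioc.prod measurableSet_Ioc)
      (fun p _ => hgprod p)
  have hQS : Qd x ⊆ S := by
    rintro ⟨a, b⟩ ⟨h1, h2, h3⟩
    simp only at h1 h2 h3
    constructor
    · exact ⟨h1, by nlinarith⟩
    · exact ⟨h2, by nlinarith⟩
  have hRS : R ⊆ S := by
    rintro ⟨a, b⟩ ⟨⟨ha1, ha2⟩, hb1, hb2⟩
    exact ⟨⟨by linarith, by linarith⟩, ⟨by linarith, by linarith⟩⟩
  have hRmeas : MeasurableSet R := measurableSet_Ioo.prod measurableSet_Ioo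
  have hdisj : Disjoint (Qd x) R := by
    rw [Set.disjoint_left]
    rintro ⟨a, b⟩ ⟨_, _, h3⟩ ⟨⟨ha1, ha2⟩, hb1, hb2⟩
    simp only at h3 ha1 hb1
    nlinarith
  have hRvol : volume R = ENNReal.ofReal (x - 4*x/5) * ENNReal.ofReal (x - 4*x/5) := by
    rw [hR, Measure.volume_eq_prod, Measure.prod_prod, Real.volume_Ioo]
  have hRpos : 0 < ∫ p in R, g p := by
    have hle : ∀ p ∈ R, Real.exp (-(x^2)) ≤ g p := by
      rintro ⟨a, b⟩ ⟨⟨ha1, ha2⟩, hb1, hb2⟩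
      rw [hg]
      apply Real.exp_le_exp.mpr
      simp only
      nlinarith
    have hbound := setIntegral_ge_of_const_le hRmeas
      (by rw [hRvol]; exact ENNReal.mul_ne_top ENNReal.ofReal_ne_top ENNReal.ofReal_ne_top)
      hle (hint.mono_set hRS)
    have hvolR : 0 < (volume R).toReal := by
      rw [hRvol, ENNReal.toReal_mul, ENNReal.toReal_ofReal (by linarith)]
      nlinarith
    calc (0:ℝ) < Real.exp (-(x^2)) * (volume R).toReal := by positivity
      _ ≤ ∫ p in R, g p := by
        exact (le_of_eq (by rw [smul_eq_mul, mul_comm, measureReal_def])).trans hbound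
  have hunion : ∫ p in Qd x ∪ R, g p = (∫ p in Qd x, g p) + ∫ p in R, g p :=
    setIntegral_union hdisj hRmeas (hint.mono_set hQS) (hint.mono_set hRS)
  have hmono : ∫ p in Qd x ∪ R, g p ≤ ∫ p in S, g p :=
    setIntegral_mono_set hint (Filter.Eventually.of_forall fun p => (Real.exp_pos _).le)
      ((Set.union_subset hQS hRS).eventuallyLE)
  have hq := quarter_disk hx
  rw [← hsq, ← hq]
  calc (∫ p in Qd x, g p) < (∫ p in Qd x, g p) + ∫ p in R, g p := by linarith
    _ = ∫ p in Qd x ∪ R, g p := hunion.symm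
    _ ≤ ∫ p in S, g p := hmono

lemma pdf_eq (t : ℝ) :
    gaussianPDFReal 0 1 t = (Real.sqrt (2*π))⁻¹ * Real.exp (-(t^2)/2) := by
  simp [gaussianPDFReal]

lemma cdf_eq (s : ℝ) : stdNormalCDF s = ∫ t in Set.Iic s, gaussianPDFReal 0 1 t := by
  rw [stdNormalCDF, gaussianReal_apply_eq_integral 0 one_ne_zero, ENNReal.toReal_ofReal]
  exact setIntegral_nonneg measurableSet_Iic (fun t _ => gaussianPDFReal_nonneg 0 1 t)

lemma split_int (a : ℝ) :
    (∫ t in Set.Iic a, gaussianPDFReal 0 1 t) + ∫ t in Set.Ioi a, gaussianPDFReal 0 1 t = 1 := by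
  have h := setIntegral_union (Set.Iic_disjoint_Ioi (le_refl a)) measurableSet_Ioi
    ((integrable_gaussianPDFReal 0 1).integrableOn) ((integrable_gaussianPDFReal 0 1).integrableOn)
    (f := gaussianPDFReal 0 1) (μ := volume)
  rw [Set.Iic_union_Ioi, setIntegral_univ, integral_gaussianPDFReal_eq_one 0 one_ne_zero] at h
  linarith [h]

lemma cdf_zero_int : ∫ t in Set.Iic (0:ℝ), gaussianPDFReal 0 1 t = 1/2 := by
  have hsym : ∫ t in Set.Iic (0:ℝ), gaussianPDFReal 0 1 t
      = ∫ t in Set.Ioi (0:ℝ), gaussianPDFReal 0 1 t := by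
    calc ∫ t in Set.Iic (0:ℝ), gaussianPDFReal 0 1 t
        = ∫ t in Set.Iic (0:ℝ), gaussianPDFReal 0 1 (-t) := by
          refine setIntegral_congr_fun measurableSet_Iic (fun t _ => ?_)
          simp [gaussianPDFReal, neg_sq]
      _ = ∫ t in Set.Ioi (-(0:ℝ)), gaussianPDFReal 0 1 t := integral_comp_neg_Iic 0 _
      _ = ∫ t in Set.Ioi (0:ℝ), gaussianPDFReal 0 1 t := by rw [neg_zero]
  linarith [split_int 0]

/-- For every `ζ > 0`, the inverse Mill's ratio satisfies
`φ(ζ)/(1-Φ(ζ)) > 2√(2/π) Φ(ζ)`. -/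
theorem stmt_13 (ζ : ℝ) (hζ : 0 < ζ) :
    stdNormalPDF ζ / (1 - stdNormalCDF ζ) > 2 * Real.sqrt (2 / Real.pi) * stdNormalCDF ζ := by
  set u := ∫ t in Set.Ioc (0:ℝ) ζ, gaussianPDFReal 0 1 t with hu_def
  have hΦ : stdNormalCDF ζ = 1/2 + u := by
    rw [cdf_eq, ← Set.Iic_union_Ioc_eq_Iic hζ.le,
      setIntegral_union (Set.Iic_disjoint_Ioc (le_refl (0:ℝ))) measurableSet_Ioc
        ((integrable_gaussianPDFReal 0 1).integrableOn)
        ((integrable_gaussianPDFReal 0 1).integrableOn),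
      cdf_zero_int]
  have h1Φ : 1 - stdNormalCDF ζ = ∫ t in Set.Ioi ζ, gaussianPDFReal 0 1 t := by
    rw [cdf_eq]
    linarith [split_int ζ]
  have h1Φpos : 0 < 1 - stdNormalCDF ζ := by
    rw [h1Φ]
    refine (setIntegral_pos_iff_support_of_nonneg_ae
      (Filter.Eventually.of_forall fun t => gaussianPDFReal_nonneg 0 1 t)
      ((integrable_gaussianPDFReal 0 1).integrableOn)).mpr ?_
    have hsupp : Function.support (gaussianPDFReal 0 1) = Set.univ :=
      Set.eq_univ_of_forall fun t => (gaussianPDFReal_pos 0 1 t one_ne_zero).ne'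
    rw [hsupp, Set.univ_inter, Real.volume_Ioi]
    simp
  have hu0 : 0 ≤ u :=
    setIntegral_nonneg measurableSet_Ioc (fun t _ => gaussianPDFReal_nonneg 0 1 t)
  -- key bound: 1 - exp(-ζ²/2) < 4 u²
  set J := ∫ t in Set.Ioc (0:ℝ) ζ, Real.exp (-(t^2)/2) with hJ_def
  have hspos : 0 < Real.sqrt (2*π) := Real.sqrt_pos.mpr (by positivity)
  have hs2 : Real.sqrt (2*π) ^ 2 = 2*π := Real.sq_sqrt (by positivity)
  have huJ : u = (Real.sqrt (2*π))⁻¹ * J := by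
    rw [hu_def, hJ_def, ← integral_const_mul]
    exact setIntegral_congr_fun measurableSet_Ioc (fun t _ => pdf_eq t)
  have hkey : 1 - Real.exp (-(ζ^2)/2) < 4 * u^2 := by
    have hJ2 := key_ineq hζ
    rw [huJ, mul_pow, inv_pow, hs2]
    rw [show (4:ℝ) * ((2*π)⁻¹ * J^2) = 2 * J^2 / π by field_simp; ring]
    rw [lt_div_iff₀ Real.pi_pos]
    nlinarith [hJ2]
  -- assemble
  have h1Φu : 1 - stdNormalCDF ζ = 1/2 - u := by rw [hΦ]; ring
  rw [gt_iff_lt, lt_div_iff₀ h1Φpos, hΦ, stdNormalPDF, pdf_eq]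
  have hc : Real.sqrt (2/π) * Real.sqrt (2*π) = 2 := by
    rw [← Real.sqrt_mul (by positivity), show (2/π) * (2*π) = 2^2 by field_simp,
      Real.sqrt_sq (by norm_num)]
  have hcs : Real.sqrt (2/π) = 2 / Real.sqrt (2*π) := eq_div_of_mul_eq hspos.ne' hc
  rw [hcs]
  rw [show 2 * (2 / Real.sqrt (2*π)) * (1/2 + u) * (1 - (1/2 + u))
      = (4 * ((1/2 + u) * (1/2 - u))) / Real.sqrt (2*π) by ring,
    show (Real.sqrt (2*π))⁻¹ * Real.exp (-(ζ^2)/2)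
      = Real.exp (-(ζ^2)/2) / Real.sqrt (2*π) by ring,
    div_lt_div_iff_of_pos_right hspos]
  nlinarith [hkey]
end

section
/- Let 0 < ε < 1 and s > 0. Then 2 e^{s√(2/π)(1-ε) + s²/2} (1 - Φ(s)) ≤ 2 e^{-s√(2/π)(1+ε) + s²/2} Φ(s); that is, the Chernoff bound B(s) for the left tail is dominated by the Chernoff bound A(s) for the right tail. -/
open MeasureTheory ProbabilityTheory Real Set Filter Topology

namespace Stmt15

noncomputable def npdf (x : ℝ) : ℝ := (Real.sqrt (2 * Real.pi))⁻¹ * Real.exp (-x ^ 2 / 2)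

noncomputable def cc : ℝ := Real.sqrt (2 / Real.pi)

lemma cc_pos : 0 < cc := Real.sqrt_pos.2 (by positivity)

lemma cc_sq : cc ^ 2 = 2 / Real.pi := Real.sq_sqrt (by positivity)

lemma npdf_pos (x : ℝ) : 0 < npdf x := by
  unfold npdf; positivity

lemma two_npdf_zero : 2 * npdf 0 = cc := by
  unfold npdf cc
  rw [show ((0:ℝ)^2) = 0 by ring]
  rw [neg_zero, zero_div, Real.exp_zero, mul_one]
  have hpos : (0:ℝ) < Real.sqrt (2 * Real.pi) := Real.sqrt_pos.2 (by positivity)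
  have h : Real.sqrt (2 / Real.pi) * Real.sqrt (2 * Real.pi) = 2 := by
    rw [← Real.sqrt_mul (by positivity)]
    rw [show 2 / Real.pi * (2 * Real.pi) = 4 by field_simp; ring]
    rw [show (4:ℝ) = 2 ^ 2 by norm_num, Real.sqrt_sq (by norm_num)]
  rw [inv_eq_one_div, mul_one_div, eq_comm, eq_div_iff hpos.ne']
  exact h

lemma npdf_eq (x : ℝ) : gaussianPDFReal 0 1 x = npdf x := by
  unfold gaussianPDFReal npdf
  norm_num

lemma integrable_npdf : Integrable npdf := by
  have := integrable_gaussianPDFReal 0 1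
  simpa [funext npdf_eq] using this

lemma cdf_eq (s : ℝ) : stdNormalCDF s = ∫ x in Iic s, npdf x := by
  unfold stdNormalCDF
  rw [gaussianReal_apply_eq_integral 0 one_ne_zero]
  rw [ENNReal.toReal_ofReal (setIntegral_nonneg measurableSet_Iic
    fun x _ => gaussianPDFReal_nonneg 0 1 x)]
  exact setIntegral_congr_fun measurableSet_Iic fun x _ => npdf_eq x

lemma integral_npdf : ∫ x, npdf x = 1 := by
  unfold npdf
  rw [MeasureTheory.integral_const_mul]
  have : ∀ x : ℝ, Real.exp (-x ^ 2 / 2) = Real.exp (-(1/2) * x ^ 2) := by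
    intro x; ring_nf
  simp_rw [this, integral_gaussian]
  rw [show Real.pi / (1/2) = 2 * Real.pi by ring]
  rw [inv_mul_cancel₀ (by positivity)]

lemma cdf_zero : stdNormalCDF 0 = 1 / 2 := by
  have h1 : ∫ x in Iic (0:ℝ), npdf x = ∫ x in Ioi (0:ℝ), npdf x := by
    calc ∫ x in Iic (0:ℝ), npdf x = ∫ x in Iic (0:ℝ), npdf (-x) := by
          refine setIntegral_congr_fun measurableSet_Iic fun x _ => ?_
          unfold npdf; rw [neg_pow]; norm_num
      _ = ∫ x in Ioi (-(0:ℝ)), npdf x := integral_comp_neg_Iic 0 npdf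
      _ = ∫ x in Ioi (0:ℝ), npdf x := by norm_num
  have h2 : (∫ x in Iic (0:ℝ), npdf x) + ∫ x in Ioi (0:ℝ), npdf x = 1 := by
    rw [intervalIntegral.integral_Iic_add_Ioi integrable_npdf.integrableOn
      integrable_npdf.integrableOn, integral_npdf]
  rw [cdf_eq]; linarith


lemma continuous_npdf : Continuous npdf := by
  unfold npdf; fun_prop

lemma hasDerivAt_npdf (x : ℝ) : HasDerivAt npdf (-x * npdf x) x := by
  unfold npdf
  have h1 : HasDerivAt (fun y : ℝ => -y ^ 2 / 2) (-x) x := by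
    have := ((hasDerivAt_pow 2 x).neg).div_const 2
    exact this.congr_deriv (by ring)
  have := h1.exp.const_mul (Real.sqrt (2 * Real.pi))⁻¹
  exact this.congr_deriv (by ring)

lemma cdf_hasDeriv (s : ℝ) : HasDerivAt stdNormalCDF (npdf s) s := by
  have heq : stdNormalCDF = fun t => (∫ x in Iic (0:ℝ), npdf x) + ∫ x in (0:ℝ)..t, npdf x := by
    funext t
    rw [cdf_eq, ← intervalIntegral.integral_Iic_sub_Iic integrable_npdf.integrableOn
      integrable_npdf.integrableOn]
    ring
  rw [heq]
  have h2 : HasDerivAt (fun t => ∫ x in (0:ℝ)..t, npdf x) (npdf s) s :=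
    intervalIntegral.integral_hasDerivAt_right
      (integrable_npdf.intervalIntegrable)
      (continuous_npdf.stronglyMeasurable.stronglyMeasurableAtFilter)
      continuous_npdf.continuousAt
  exact h2.const_add _

lemma continuous_cdf : Continuous stdNormalCDF := by
  have : Differentiable ℝ stdNormalCDF := fun s => (cdf_hasDeriv s).differentiableAt
  exact this.continuous

lemma cdf_tendsto : Tendsto stdNormalCDF atTop (𝓝 1) := by
  have h := tendsto_measure_Iic_atTop (gaussianReal 0 1)
  rw [measure_univ] at h
  have := (ENNReal.tendsto_toReal ENNReal.one_ne_top).comp h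
  exact (by simpa using this : Tendsto (ENNReal.toReal ∘ fun x => (gaussianReal 0 1) (Iic x)) atTop (𝓝 1))

lemma cdf_le_one (s : ℝ) : stdNormalCDF s ≤ 1 := by
  have := ENNReal.toReal_mono ENNReal.one_ne_top (prob_le_one (μ := gaussianReal 0 1) (s := Iic s))
  simpa [stdNormalCDF] using this

lemma npdf_tendsto : Tendsto npdf atTop (𝓝 0) := by
  unfold npdf
  rw [show (0:ℝ) = (Real.sqrt (2 * Real.pi))⁻¹ * 0 by ring]
  apply Tendsto.const_mul
  have h1 : Tendsto (fun x : ℝ => x ^ 2 / 2) atTop atTop := by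
    apply Tendsto.atTop_div_const (by norm_num)
    exact tendsto_pow_atTop (by norm_num)
  have h2 := (Real.tendsto_exp_neg_atTop_nhds_zero).comp h1
  exact h2.congr fun x => by rw [Function.comp_apply]; congr 1; ring

noncomputable def Q (s : ℝ) : ℝ :=
  2 * cc * (1 - Real.exp (-(2 * cc * s))) - s * (1 + Real.exp (-(2 * cc * s)))

noncomputable def R (s : ℝ) : ℝ :=
  (4 * cc ^ 2 - 1 + 2 * cc * s) * Real.exp (-(2 * cc * s))

lemma hasDerivAt_E (s : ℝ) :
    HasDerivAt (fun t : ℝ => Real.exp (-(2 * cc * t)))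
      (-(2 * cc) * Real.exp (-(2 * cc * s))) s := by
  have h1 : HasDerivAt (fun t : ℝ => -(2 * cc * t)) (-(2 * cc)) s := by
    exact (((hasDerivAt_id s).const_mul (2 * cc)).neg).congr_deriv (by ring)
  simpa [mul_comm] using h1.exp

lemma hasDerivAt_Q (s : ℝ) : HasDerivAt Q (R s - 1) s := by
  unfold Q R
  have hE := hasDerivAt_E s
  have h1 : HasDerivAt (fun t : ℝ => 2 * cc * (1 - Real.exp (-(2 * cc * t))))
      (2 * cc * (2 * cc * Real.exp (-(2 * cc * s)))) s := by
    simpa using (((hasDerivAt_const s (1:ℝ)).sub hE).const_mul (2 * cc))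
  have h2 := (hasDerivAt_id s).mul ((hasDerivAt_const s (1:ℝ)).add hE)
  have := h1.sub h2
  exact this.congr_deriv (by simp only [id_eq, Pi.add_apply]; ring)

lemma hasDerivAt_R (s : ℝ) :
    HasDerivAt R (2 * cc * (2 - 4 * cc ^ 2 - 2 * cc * s) * Real.exp (-(2 * cc * s))) s := by
  unfold R
  have hE := hasDerivAt_E s
  have h1 : HasDerivAt (fun t : ℝ => 4 * cc ^ 2 - 1 + 2 * cc * t) (2 * cc) s := by
    simpa using ((hasDerivAt_id s).const_mul (2 * cc)).const_add (4 * cc ^ 2 - 1)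
  have := h1.mul hE
  exact this.congr_deriv (by ring)

lemma cc_sq_gt : 2 < 4 * cc ^ 2 := by
  rw [cc_sq]
  rw [show (4:ℝ) * (2 / Real.pi) = 8 / Real.pi by ring]
  rw [lt_div_iff₀ Real.pi_pos]
  nlinarith [Real.pi_lt_d2]

lemma continuous_R : Continuous R := by unfold R; fun_prop

lemma continuous_Q : Continuous Q := by unfold Q; fun_prop

lemma R_anti : StrictAntiOn R (Ici 0) := by
  apply strictAntiOn_of_deriv_neg (convex_Ici 0) continuous_R.continuousOn
  intro x hx
  rw [interior_Ici] at hx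
  rw [(hasDerivAt_R x).deriv]
  have hx' : (0:ℝ) < x := hx
  have hc := cc_pos
  have h1 : 2 - 4 * cc ^ 2 - 2 * cc * x < 0 := by nlinarith [cc_sq_gt]
  have h2 : (0:ℝ) < 2 * cc := by linarith
  have h3 : 0 < Real.exp (-(2 * cc * x)) := Real.exp_pos _
  exact mul_neg_of_neg_of_pos (mul_neg_of_pos_of_neg h2 h1) h3

lemma R_tendsto : Tendsto R atTop (𝓝 0) := by
  have hg : Tendsto (fun u : ℝ => (4 * cc ^ 2 - 1) * Real.exp (-u) + u * Real.exp (-u))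
      atTop (𝓝 0) := by
    have h1 := (Real.tendsto_exp_neg_atTop_nhds_zero).const_mul (4 * cc ^ 2 - 1)
    have h2 := Real.tendsto_pow_mul_exp_neg_atTop_nhds_zero 1
    simp only [pow_one] at h2
    simpa using h1.add h2
  have hcomp : Tendsto (fun s : ℝ => 2 * cc * s) atTop atTop :=
    Tendsto.const_mul_atTop (by linarith [cc_pos]) tendsto_id
  have := hg.comp hcomp
  refine this.congr fun s => ?_
  simp only [Function.comp_apply]
  unfold R
  ring

lemma Q_zero : Q 0 = 0 := by unfold Q; simp

lemma R_zero : R 0 = 4 * cc ^ 2 - 1 := by unfold R; simp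

noncomputable def P (s : ℝ) : ℝ :=
  npdf s * (1 + Real.exp (-(2 * cc * s))) - 2 * cc * (1 - stdNormalCDF s)

lemma hasDerivAt_P (s : ℝ) : HasDerivAt P (npdf s * Q s) s := by
  unfold P
  have hE := hasDerivAt_E s
  have h1 := (hasDerivAt_npdf s).mul ((hasDerivAt_const s (1:ℝ)).add hE)
  have h2 := ((hasDerivAt_const s (1:ℝ)).sub (cdf_hasDeriv s)).const_mul (2 * cc)
  have := h1.sub h2
  exact this.congr_deriv (by unfold Q; simp only [Pi.add_apply]; ring)

lemma P_zero : P 0 = 0 := by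
  unfold P
  rw [cdf_zero]
  have := two_npdf_zero
  simp only [mul_zero, neg_zero, Real.exp_zero]
  linarith

lemma E_tendsto : Tendsto (fun s : ℝ => Real.exp (-(2 * cc * s))) atTop (𝓝 0) := by
  have h := Real.tendsto_exp_neg_atTop_nhds_zero.comp
    (Tendsto.const_mul_atTop (by linarith [cc_pos] : (0:ℝ) < 2 * cc) tendsto_id)
  exact h.congr fun s => by simp [Function.comp]

lemma P_tendsto : Tendsto P atTop (𝓝 0) := by
  have h1 : Tendsto (fun s => npdf s * (1 + Real.exp (-(2 * cc * s)))) atTop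
      (𝓝 (0 * (1 + 0))) := npdf_tendsto.mul (tendsto_const_nhds.add E_tendsto)
  have h2 : Tendsto (fun s => 2 * cc * (1 - stdNormalCDF s)) atTop
      (𝓝 (2 * cc * (1 - 1))) := (tendsto_const_nhds.sub cdf_tendsto).const_mul _
  have := h1.sub h2
  exact (by simpa using this : Tendsto (fun x => npdf x * (1 + rexp (-(2 * cc * x))) - 2 * cc * (1 - stdNormalCDF x)) atTop (𝓝 0))

lemma continuous_P : Continuous P :=
  Differentiable.continuous fun s => (hasDerivAt_P s).differentiableAt

lemma P_nonneg : ∀ s ∈ Ici (0:ℝ), 0 ≤ P s := by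
  obtain ⟨s₁, hs₁0, hs₁⟩ : ∃ s₁ ≥ (0:ℝ), R s₁ < 1 := by
    have h := R_tendsto.eventually_lt_const (by norm_num : (0:ℝ) < 1)
    exact ((eventually_ge_atTop (0:ℝ)).and h).exists.imp fun x hx => ⟨hx.1, hx.2⟩
  have hR0 : 1 < R 0 := by rw [R_zero]; linarith [cc_sq_gt]
  obtain ⟨s₀, hs₀mem, hRs₀⟩ : ∃ s₀ ∈ Icc (0:ℝ) s₁, R s₀ = 1 := by
    have h := intermediate_value_Icc' hs₁0 continuous_R.continuousOn
    have : (1:ℝ) ∈ Icc (R s₁) (R 0) := ⟨hs₁.le, hR0.le⟩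
    obtain ⟨s₀, hmem, heq⟩ := h this
    exact ⟨s₀, hmem, heq⟩
  have hs₀0 : (0:ℝ) ≤ s₀ := hs₀mem.1
  -- Q is monotone on [0, s₀]
  have hQmono : MonotoneOn Q (Icc 0 s₀) := by
    refine monotoneOn_of_deriv_nonneg (convex_Icc _ _) continuous_Q.continuousOn
      (fun x _ => (hasDerivAt_Q x).differentiableAt.differentiableWithinAt) fun x hx => ?_
    rw [interior_Icc] at hx
    rw [(hasDerivAt_Q x).deriv]
    have : R s₀ < R x := R_anti (mem_Ici.2 hx.1.le) (mem_Ici.2 hs₀0) hx.2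
    linarith [hRs₀ ▸ this]
  -- Q is antitone on [s₀, ∞)
  have hQanti : AntitoneOn Q (Ici s₀) := by
    refine antitoneOn_of_deriv_nonpos (convex_Ici _) continuous_Q.continuousOn
      (fun x _ => (hasDerivAt_Q x).differentiableAt.differentiableWithinAt) fun x hx => ?_
    rw [interior_Ici] at hx
    rw [(hasDerivAt_Q x).deriv]
    have : R x < R s₀ := R_anti (mem_Ici.2 hs₀0) (mem_Ici.2 (le_trans hs₀0 hx.le)) hx
    linarith [hRs₀ ▸ this]
  have hQs₀ : 0 ≤ Q s₀ := by
    have := hQmono (left_mem_Icc.2 hs₀0) (right_mem_Icc.2 hs₀0) hs₀0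
    rwa [Q_zero] at this
  -- a point where Q is negative
  set s₃ := s₀ + 2 * cc + 1 with hs₃def
  have hs₀s₃ : s₀ ≤ s₃ := by have := cc_pos; simp only [hs₃def]; linarith
  have hs₃0 : (0:ℝ) ≤ s₃ := le_trans hs₀0 hs₀s₃
  have hQs₃ : Q s₃ < 0 := by
    have hE1 : Real.exp (-(2 * cc * s₃)) ≤ 1 := by
      rw [Real.exp_le_one_iff]
      have := cc_pos; nlinarith
    have hE0 : 0 < Real.exp (-(2 * cc * s₃)) := Real.exp_pos _
    unfold Q
    have := cc_pos
    nlinarith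
  obtain ⟨s₂, hs₂mem, hQs₂⟩ : ∃ s₂ ∈ Icc s₀ s₃, Q s₂ = 0 := by
    have h := intermediate_value_Icc' hs₀s₃ continuous_Q.continuousOn
    have : (0:ℝ) ∈ Icc (Q s₃) (Q s₀) := ⟨hQs₃.le, hQs₀⟩
    obtain ⟨s₂, hmem, heq⟩ := h this
    exact ⟨s₂, hmem, heq⟩
  have hs₂0 : (0:ℝ) ≤ s₂ := le_trans hs₀0 hs₂mem.1
  -- Q sign
  have hQpos : ∀ t ∈ Icc (0:ℝ) s₂, 0 ≤ Q t := by
    intro t ht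
    rcases le_total t s₀ with h | h
    · have := hQmono (left_mem_Icc.2 hs₀0) ⟨ht.1, h⟩ ht.1
      rwa [Q_zero] at this
    · have := hQanti (mem_Ici.2 h) (mem_Ici.2 hs₂mem.1) ht.2
      rwa [hQs₂] at this
  have hQneg : ∀ t ∈ Ici s₂, Q t ≤ 0 := by
    intro t ht
    have := hQanti (mem_Ici.2 hs₂mem.1) (mem_Ici.2 (le_trans hs₂mem.1 ht)) ht
    rwa [hQs₂] at this
  -- P monotone on [0, s₂], antitone on [s₂, ∞)
  have hPmono : MonotoneOn P (Icc 0 s₂) := by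
    refine monotoneOn_of_deriv_nonneg (convex_Icc _ _) continuous_P.continuousOn
      (fun x _ => (hasDerivAt_P x).differentiableAt.differentiableWithinAt) fun x hx => ?_
    rw [interior_Icc] at hx
    rw [(hasDerivAt_P x).deriv]
    exact mul_nonneg (npdf_pos x).le (hQpos x ⟨hx.1.le, hx.2.le⟩)
  have hPanti : AntitoneOn P (Ici s₂) := by
    refine antitoneOn_of_deriv_nonpos (convex_Ici _) continuous_P.continuousOn
      (fun x _ => (hasDerivAt_P x).differentiableAt.differentiableWithinAt) fun x hx => ?_
    rw [interior_Ici] at hx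
    rw [(hasDerivAt_P x).deriv]
    exact mul_nonpos_of_nonneg_of_nonpos (npdf_pos x).le (hQneg x (mem_Ici.2 (mem_Ioi.1 hx).le))
  intro s hs
  rcases le_total s s₂ with h | h
  · have := hPmono (left_mem_Icc.2 hs₂0) ⟨hs, h⟩ hs
    rwa [P_zero] at this
  · refine le_of_tendsto P_tendsto ?_
    filter_upwards [eventually_ge_atTop s] with t ht
    exact hPanti h (le_trans h ht) ht

lemma cdf_key (s : ℝ) (hs : 0 ≤ s) :
    (1 - stdNormalCDF s) * Real.exp (2 * cc * s) ≤ stdNormalCDF s := by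
  have hH : ∀ t : ℝ, HasDerivAt
      (fun u => stdNormalCDF u - (1 - stdNormalCDF u) * Real.exp (2 * cc * u))
      (Real.exp (2 * cc * t) * P t) t := by
    intro t
    have hE2 : HasDerivAt (fun u : ℝ => Real.exp (2 * cc * u))
        (2 * cc * Real.exp (2 * cc * t)) t := by
      simpa [mul_comm] using ((hasDerivAt_id t).const_mul (2 * cc)).exp
    have h1 := ((hasDerivAt_const t (1:ℝ)).sub (cdf_hasDeriv t)).mul hE2
    have := (cdf_hasDeriv t).sub h1
    refine this.congr_deriv (Eq.symm ?_)
    have hmul : Real.exp (2 * cc * t) * Real.exp (-(2 * cc * t)) = 1 := by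
      rw [← Real.exp_add]; norm_num
    unfold P
    simp only [Pi.sub_apply]
    linear_combination npdf t * hmul
  have hmono : MonotoneOn
      (fun u => stdNormalCDF u - (1 - stdNormalCDF u) * Real.exp (2 * cc * u)) (Ici 0) := by
    refine monotoneOn_of_deriv_nonneg (convex_Ici _)
      (Differentiable.continuous fun x => (hH x).differentiableAt).continuousOn
      (fun x _ => (hH x).differentiableAt.differentiableWithinAt) fun x hx => ?_
    rw [interior_Ici] at hx
    rw [(hH x).deriv]
    exact mul_nonneg (Real.exp_pos _).le (P_nonneg x (mem_Ici.2 (mem_Ioi.1 hx).le))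
  have h0 := hmono (self_mem_Ici) (mem_Ici.2 hs) hs
  simp only [cdf_zero, mul_zero, Real.exp_zero] at h0
  norm_num at h0
  linarith

end Stmt15

/-- For `0 < ε < 1` and `s > 0`, the Chernoff bound `B(s)` for the left tail is dominated
by the Chernoff bound `A(s)` for the right tail:
`2 e^{s√(2/π)(1-ε)+s²/2}(1-Φ(s)) ≤ 2 e^{-s√(2/π)(1+ε)+s²/2} Φ(s)`. -/
theorem stmt_15 (ε : ℝ) (hε0 : 0 < ε) (hε1 : ε < 1) (s : ℝ) (hs : 0 < s) :
    2 * Real.exp (s * Real.sqrt (2 / Real.pi) * (1 - ε) + s ^ 2 / 2) * (1 - stdNormalCDF s)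
      ≤ 2 * Real.exp (-(s * Real.sqrt (2 / Real.pi) * (1 + ε)) + s ^ 2 / 2) * stdNormalCDF s := by
  have key := Stmt15.cdf_key s hs.le
  rw [Stmt15.cc] at key
  have hexp : Real.exp (s * Real.sqrt (2 / Real.pi) * (1 - ε) + s ^ 2 / 2)
      = Real.exp (-(s * Real.sqrt (2 / Real.pi) * (1 + ε)) + s ^ 2 / 2)
        * Real.exp (2 * Real.sqrt (2 / Real.pi) * s) := by
    rw [← Real.exp_add]; congr 1; ring
  rw [hexp]
  have hpos : (0:ℝ) ≤ 2 * Real.exp (-(s * Real.sqrt (2 / Real.pi) * (1 + ε)) + s ^ 2 / 2) := by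
    positivity
  calc 2 * (Real.exp (-(s * Real.sqrt (2 / Real.pi) * (1 + ε)) + s ^ 2 / 2)
        * Real.exp (2 * Real.sqrt (2 / Real.pi) * s)) * (1 - stdNormalCDF s)
      = 2 * Real.exp (-(s * Real.sqrt (2 / Real.pi) * (1 + ε)) + s ^ 2 / 2)
        * ((1 - stdNormalCDF s) * Real.exp (2 * Real.sqrt (2 / Real.pi) * s)) := by ring
    _ ≤ _ := mul_le_mul_of_nonneg_left key hpos
end

section
/- For every real x and for q ∈ {1, 2, 3}, one has 1 + (1/q)·(cosh(x√q) - 1) ≤ e^{x²/2}. -/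
open Function Nat

lemma hasSum_exp_real' (r : ℝ) : HasSum (fun n : ℕ => r ^ n / n !) (Real.exp r) := by
  rw [Real.exp_eq_exp_ℝ]
  exact NormedSpace.expSeries_div_hasSum_exp r

lemma hasSum_cosh_real' (y : ℝ) :
    HasSum (fun n : ℕ => y ^ (2 * n) / (2 * n)!) (Real.cosh y) := by
  have h1 := ((hasSum_exp_real' y).add (hasSum_exp_real' (-y))).div_const 2
  rw [← Real.cosh_eq] at h1
  have h2 : HasSum (fun n : ℕ => (y ^ n / n ! + (-y) ^ n / n !) / 2) (Real.cosh y) := h1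
  have hinj : Function.Injective (fun n : ℕ => 2 * n) := fun a b h => by
    simp only [] at h; omega
  have h3 := (Function.Injective.hasSum_iff hinj
    (f := fun n : ℕ => (y ^ n / n ! + (-y) ^ n / n !) / 2)
    (by
      intro m hm
      have hodd : Odd m := by
        rcases Nat.even_or_odd m with ⟨k, hk⟩ | ho
        · exact absurd ⟨k, show 2 * k = m by omega⟩ hm
        · exact ho
      simp [hodd.neg_pow]
      ring)).mpr h2
  refine h3.congr_fun fun n => ?_
  have heven : Even (2 * n) := ⟨n, by omega⟩
  simp [heven.neg_pow]

lemma fact_key (q : ℕ) (hq : q ≤ 3) : ∀ m : ℕ, q ^ m * 2 ^ (m + 1) * (m + 1)! ≤ (2 * (m + 1))! := by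
  intro m
  induction m with
  | zero => simp [Nat.factorial]
  | succ m ih =>
    have e : q ^ (m + 1) * 2 ^ (m + 1 + 1) * (m + 1 + 1)! =
        (q ^ m * 2 ^ (m + 1) * (m + 1)!) * (q * (2 * (m + 2))) := by
      rw [Nat.factorial_succ]; ring
    have e2 : (2 * (m + 1 + 1))! = (2 * (m + 1))! * ((2 * m + 3) * (2 * m + 4)) := by
      rw [show 2 * (m + 1 + 1) = (2 * m + 3) + 1 from by ring, Nat.factorial_succ,
        show 2 * m + 3 = (2 * (m + 1)) + 1 from by ring, Nat.factorial_succ]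
      ring
    rw [e, e2]
    refine Nat.mul_le_mul ih ?_
    calc q * (2 * (m + 2)) ≤ 3 * (2 * (m + 2)) := Nat.mul_le_mul_right _ hq
      _ ≤ (2 * m + 3) * (2 * m + 4) := Nat.mul_le_mul (by omega) (by omega)

/-- For every real `x` and `q ∈ {1,2,3}`,
`1 + (1/q)(cosh(x√q) - 1) ≤ e^{x²/2}`. -/
theorem stmt_16 (x : ℝ) (q : ℕ) (hq : q = 1 ∨ q = 2 ∨ q = 3) :
    1 + (1 / (q : ℝ)) * (Real.cosh (x * Real.sqrt q) - 1) ≤ Real.exp (x ^ 2 / 2) := by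
  obtain ⟨hq1, hq3⟩ : 1 ≤ q ∧ q ≤ 3 := by omega
  have hq0 : (0 : ℝ) < q := by exact_mod_cast hq1
  set y := x * Real.sqrt q with hy
  have hy2 : y ^ 2 = x ^ 2 * q := by
    rw [hy, mul_pow, Real.sq_sqrt (by positivity : (0:ℝ) ≤ (q:ℝ))]
  have hc := (hasSum_cosh_real' y).div_const q
  have hL := hc.update 0 1
  have hR := hasSum_exp_real' (x ^ 2 / 2)
  have hterm : ∀ n : ℕ,
      Function.update (fun n : ℕ => y ^ (2 * n) / (2 * n)! / q) 0 1 n ≤ (x ^ 2 / 2) ^ n / n ! := by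
    intro n
    match n with
    | 0 => simp
    | (m + 1) =>
      rw [Function.update_of_ne (Nat.succ_ne_zero m)]
      set n := m + 1 with hn
      have e1 : y ^ (2 * n) = (x ^ 2) ^ n * (q : ℝ) ^ n := by
        rw [pow_mul, hy2, mul_pow]
      rw [e1, div_pow, div_div, div_div]
      rw [div_le_div_iff₀ (by positivity) (by positivity)]
      have hcast : (q : ℝ) ^ n * (2 ^ n * (n ! : ℝ)) ≤ ((2 * n)! : ℝ) * q := by
        have hnat : q ^ n * (2 ^ n * n !) ≤ (2 * n)! * q := by
          have := fact_key q hq3 m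
          calc q ^ n * (2 ^ n * n !) = (q ^ m * 2 ^ (m + 1) * (m + 1)!) * q := by
                rw [hn, pow_succ]; ring
            _ ≤ (2 * (m + 1))! * q := Nat.mul_le_mul_right _ this
            _ = (2 * n)! * q := by rw [hn]
        exact_mod_cast hnat
      calc (x ^ 2) ^ n * (q : ℝ) ^ n * (2 ^ n * n !)
          = (x ^ 2) ^ n * ((q : ℝ) ^ n * (2 ^ n * n !)) := by ring
        _ ≤ (x ^ 2) ^ n * (((2 * n)! : ℝ) * q) :=
            mul_le_mul_of_nonneg_left hcast (by positivity)
        _ = (x ^ 2) ^ n * ((2 * n)! * q) := by ring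
  have := hasSum_le hterm hL hR
  have hval : 1 - y ^ (2 * 0) / (2 * 0)! / q + Real.cosh y / q
      = 1 + (1 / (q : ℝ)) * (Real.cosh y - 1) := by
    simp [Nat.factorial]
    ring
  rw [hval] at this
  exact this
end

section
/- Let q ∈ {1, 2, 3}, let p be a positive integer, let c₁, …, c_p be real numbers with ∑_{i=1}^p c_i² = 1, and let t be any real number. Then ∏_{i=1}^p ( 1 + (1/q)(cosh(c_i t √q) - 1) ) ≤ e^{t²/2}; that is, the moment generating function of y = ∑ c_i R_i, where the R_i are i.i.d. Achlioptas random variables with parameter q, is bounded by the moment generating function of a standard Gaussian. -/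
open scoped Nat
open NormedSpace

lemma fact_ineq : ∀ n : ℕ, 3 ^ n * 2 ^ (n + 1) * (n + 1)! ≤ (2 * (n + 1))! := by
  intro n
  induction n with
  | zero => decide
  | succ m ih =>
    have h1 : 2 * (m + 2) = 2 * (m + 1) + 1 + 1 := by ring
    calc 3 ^ (m + 1) * 2 ^ (m + 2) * (m + 2)!
        = (6 * (m + 2)) * (3 ^ m * 2 ^ (m + 1) * (m + 1)!) := by
          rw [Nat.factorial_succ]; ring
      _ ≤ (6 * (m + 2)) * (2 * (m + 1))! := Nat.mul_le_mul_left _ ih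
      _ ≤ ((2 * (m + 1) + 2) * (2 * (m + 1) + 1)) * (2 * (m + 1))! := by
          apply Nat.mul_le_mul_right
          nlinarith
      _ = (2 * (m + 2))! := by
          rw [h1, Nat.factorial_succ, Nat.factorial_succ]; ring

lemma key_ineq_s17 (q : ℕ) (hq1 : 1 ≤ q) (hq3 : q ≤ 3) (x : ℝ) :
    1 + (1 / (q : ℝ)) * (Real.cosh (x * Real.sqrt q) - 1) ≤ Real.exp (x ^ 2 / 2) := by
  have hq0 : (0 : ℝ) < q := by exact_mod_cast hq1
  set y := x * Real.sqrt q with hy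
  have hy2 : y ^ 2 = (q : ℝ) * x ^ 2 := by
    rw [hy, mul_pow, Real.sq_sqrt (by positivity)]; ring
  have hA := (Real.hasSum_cosh y).mul_left (1 / (q : ℝ))
  have hB := hasSum_ite_eq (0 : ℕ) (1 - 1 / (q : ℝ))
  have hS := hA.add hB
  have hval : (1 : ℝ) + (1 / (q : ℝ)) * (Real.cosh y - 1)
      = 1 / (q : ℝ) * Real.cosh y + (1 - 1 / (q : ℝ)) := by ring
  rw [hval, ← hS.tsum_eq, Real.exp_eq_exp_ℝ, exp_eq_tsum ℝ]
  refine Summable.tsum_le_tsum (fun n => ?_) hS.summable (expSeries_summable' (𝕂 := ℝ) (x ^ 2 / 2))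
  cases n with
  | zero => simp
  | succ m =>
    simp only [if_neg (Nat.succ_ne_zero m), add_zero, smul_eq_mul]
    rw [pow_mul, hy2, mul_pow, div_pow]
    have hnat : (q : ℝ) ^ m * (2 ^ (m + 1) * ((m + 1)! : ℝ)) ≤ ((2 * (m + 1))! : ℝ) := by
      have h1 : q ^ m * (2 ^ (m + 1) * (m + 1)!) ≤ 3 ^ m * 2 ^ (m + 1) * (m + 1)! := by
        have h := Nat.pow_le_pow_left hq3 m
        rw [mul_assoc]
        exact Nat.mul_le_mul_right _ h
      have h2 := fact_ineq m
      have := le_trans h1 h2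
      exact_mod_cast this
    have hF1 : (0 : ℝ) < ((2 * (m + 1))! : ℝ) := by positivity
    have hF2 : (0 : ℝ) < ((m + 1)! : ℝ) := by positivity
    have hX : (0 : ℝ) ≤ (x ^ 2) ^ (m + 1) := by positivity
    have hrw : 1 / (q : ℝ) * ((q : ℝ) ^ (m + 1) * (x ^ 2) ^ (m + 1) / ((2 * (m + 1))! : ℝ))
        = (q : ℝ) ^ m * (x ^ 2) ^ (m + 1) / ((2 * (m + 1))! : ℝ) := by
      field_simp
      ring
    have hrw2 : (((m + 1)! : ℝ))⁻¹ * ((x ^ 2) ^ (m + 1) / 2 ^ (m + 1))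
        = (x ^ 2) ^ (m + 1) / (2 ^ (m + 1) * ((m + 1)! : ℝ)) := by
      field_simp
    rw [hrw, hrw2, div_le_div_iff₀ hF1 (by positivity)]
    nlinarith [mul_le_mul_of_nonneg_right hnat hX]

/-- For `q ∈ {1,2,3}`, reals `c₁, …, c_p` with `∑ cᵢ² = 1` and any real `t`, the moment
generating function `∏ᵢ (1 + (1/q)(cosh(cᵢ t √q) - 1))` of `∑ cᵢ Rᵢ` (with `Rᵢ` i.i.d.
Achlioptas variables with parameter `q`) is bounded by `e^{t²/2}`. -/
theorem stmt_17 (q : ℕ) (hq : q = 1 ∨ q = 2 ∨ q = 3) (p : ℕ) (hp : 0 < p)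
    (c : Fin p → ℝ) (hc : ∑ i, (c i) ^ 2 = 1) (t : ℝ) :
    ∏ i, (1 + (1 / (q : ℝ)) * (Real.cosh (c i * t * Real.sqrt q) - 1))
      ≤ Real.exp (t ^ 2 / 2) := by
  have hq1 : 1 ≤ q := by rcases hq with h | h | h <;> omega
  have hq3 : q ≤ 3 := by rcases hq with h | h | h <;> omega
  have hq0 : (0 : ℝ) < q := by exact_mod_cast hq1
  calc ∏ i, (1 + (1 / (q : ℝ)) * (Real.cosh (c i * t * Real.sqrt q) - 1))
      ≤ ∏ i, Real.exp ((c i * t) ^ 2 / 2) := by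
        apply Finset.prod_le_prod
        · intro i _
          have h1 := Real.one_le_cosh (c i * t * Real.sqrt q)
          have h2 : (0 : ℝ) ≤ 1 / (q : ℝ) := by positivity
          nlinarith
        · intro i _
          exact key_ineq_s17 q hq1 hq3 (c i * t)
    _ = Real.exp (∑ i, (c i * t) ^ 2 / 2) := (Real.exp_sum _ _).symm
    _ = Real.exp (t ^ 2 / 2) := by
        congr 1
        have h : ∀ i : Fin p, (c i * t) ^ 2 / 2 = c i ^ 2 * (t ^ 2 / 2) := by
          intro i; ring
        rw [Finset.sum_congr rfl (fun i _ => h i), ← Finset.sum_mul, hc, one_mul]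
end
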